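/- arXiv:1507.01548 — 5 statements merged into one kernel-verified Lean document; each statement's English description precedes it below -/
import Mathlib

section
/- Under the truncation model with both second-order conditions holding, C(t)/Ḡ(t) → 1 as t → ∞, where C(z) := F(z) − G(z) and Ḡ := 1 − G. -/
open MeasureTheory Filter Set Real

/-- Generalized tail quantile function `K^←(1 - 1/t)`. -/
noncomputable def tailQuantile (K : ℝ → ℝ) (t : ℝ) : ℝ := sInf {y : ℝ | 1 - 1 / t ≤ K y}

section AuxLemmas

lemma auxC_nonneg (K : ℝ → ℝ) (hK0 : ∀ x ≤ (0:ℝ), K x = 0) (hmono : Monotone K) (x : ℝ) :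
    0 ≤ K x := by
  rcases le_total x 0 with hx | hx
  · rw [hK0 x hx]
  · rw [← hK0 0 le_rfl]; exact hmono hx

lemma auxC_univ (K : ℝ → ℝ) (μ : Measure ℝ) (h : ∀ b, μ (Set.Iic b) = ENNReal.ofReal (K b))
    (htop : Tendsto K atTop (nhds 1)) : μ Set.univ = 1 := by
  have h1 := tendsto_measure_Iic_atTop μ
  have h2 : Tendsto (fun b => ENNReal.ofReal (K b)) atTop (nhds (μ Set.univ)) := by
    simpa [h] using h1
  have h3 : Tendsto (fun b => ENNReal.ofReal (K b)) atTop (nhds (ENNReal.ofReal 1)) :=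
    (ENNReal.continuous_ofReal.tendsto 1).comp htop
  have := tendsto_nhds_unique h2 h3
  simpa using this

lemma auxC_Ioc (K : ℝ → ℝ) (μ : Measure ℝ) (h : ∀ b, μ (Set.Iic b) = ENNReal.ofReal (K b))
    (hK0 : ∀ x ≤ (0:ℝ), K x = 0) (hmono : Monotone K) {a b : ℝ} (hab : a ≤ b) :
    μ (Set.Ioc a b) = ENNReal.ofReal (K b - K a) := by
  have hne : μ (Set.Iic a) ≠ ⊤ := by rw [h]; exact ENNReal.ofReal_ne_top
  rw [(show Set.Ioc a b = Set.Iic b \ Set.Iic a by ext x; simp [and_comm]), measure_diff (Set.Iic_subset_Iic.2 hab)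
    measurableSet_Iic.nullMeasurableSet hne, h, h,
    ← ENNReal.ofReal_sub _ (auxC_nonneg K hK0 hmono a)]

lemma auxC_Ioi (K : ℝ → ℝ) (μ : Measure ℝ) (h : ∀ b, μ (Set.Iic b) = ENNReal.ofReal (K b))
    (hK0 : ∀ x ≤ (0:ℝ), K x = 0) (hmono : Monotone K)
    (htop : Tendsto K atTop (nhds 1)) (a : ℝ) :
    μ (Set.Ioi a) = ENNReal.ofReal (1 - K a) := by
  have hne : μ (Set.Iic a) ≠ ⊤ := by rw [h]; exact ENNReal.ofReal_ne_top
  have he : Set.Ioi a = Set.univ \ Set.Iic a := by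
    rw [Set.diff_eq, Set.univ_inter, Set.compl_Iic]
  rw [he, measure_diff (Set.subset_univ _) measurableSet_Iic.nullMeasurableSet hne,
    auxC_univ K μ h htop, h, ← ENNReal.ofReal_one,
    ← ENNReal.ofReal_sub _ (auxC_nonneg K hK0 hmono a)]

lemma auxC_singleton (K : ℝ → ℝ) (μ : Measure ℝ) (h : ∀ b, μ (Set.Iic b) = ENNReal.ofReal (K b))
    (hK0 : ∀ x ≤ (0:ℝ), K x = 0) (hmono : Monotone K) (hcont : Continuous K) (x : ℝ) :
    μ {x} = 0 := by
  have key : ∀ n : ℕ, μ {x} ≤ ENNReal.ofReal (K x - K (x - 1/(n+1))) := by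
    intro n
    have hlt : x - 1/(n+1) < x := by
      have : (0:ℝ) < 1/(n+1) := by positivity
      linarith
    have hsub : ({x} : Set ℝ) ⊆ Set.Ioc (x - 1/(n+1)) x := by
      intro y hy
      simp only [Set.mem_singleton_iff] at hy
      subst hy
      exact ⟨hlt, le_rfl⟩
    calc μ {x} ≤ μ (Set.Ioc (x - 1/(n+1)) x) := measure_mono hsub
      _ = ENNReal.ofReal (K x - K (x - 1/(n+1))) := auxC_Ioc K μ h hK0 hmono hlt.le
  have hlim : Tendsto (fun n : ℕ => ENNReal.ofReal (K x - K (x - 1/(n+1)))) atTop (nhds 0) := by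
    have h1 : Tendsto (fun n : ℕ => x - 1/(n+1)) atTop (nhds x) := by
      have := tendsto_one_div_add_atTop_nhds_zero_nat (𝕜 := ℝ)
      have h2 := tendsto_const_nhds (x := x) (f := atTop (α := ℕ))
      simpa using h2.sub this
    have h3 : Tendsto (fun n : ℕ => K x - K (x - 1/(n+1))) atTop (nhds 0) := by
      have := (hcont.tendsto x).comp h1
      simpa using (tendsto_const_nhds (x := K x) (f := atTop (α := ℕ))).sub this
    have := (ENNReal.continuous_ofReal.tendsto 0).comp h3
    simpa [Function.comp_def] using this
  have := ge_of_tendsto' hlim key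
  simpa using this

lemma aux_sliceF (μ ν : Measure ℝ) [SFinite ν] (s : Set ℝ) (hs : MeasurableSet s) :
    (μ.prod ν) {q : ℝ × ℝ | q.1 ∈ s ∧ q.1 < q.2} = ∫⁻ z in s, ν (Set.Ioi z) ∂μ := by
  have hmeas : MeasurableSet {q : ℝ × ℝ | q.1 ∈ s ∧ q.1 < q.2} :=
    (measurable_fst hs).inter (measurableSet_lt measurable_fst measurable_snd)
  rw [Measure.prod_apply hmeas, ← lintegral_indicator hs]
  congr 1
  ext z
  by_cases hz : z ∈ s <;>
    simp [Set.indicator, hz, Set.preimage, Set.Ioi]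

lemma aux_sliceG (μ ν : Measure ℝ) [SFinite μ] [SFinite ν] (s : Set ℝ) (hs : MeasurableSet s) :
    (μ.prod ν) {q : ℝ × ℝ | q.2 ∈ s ∧ q.1 ≤ q.2} = ∫⁻ w in s, μ (Set.Iic w) ∂ν := by
  have hmeas : MeasurableSet {q : ℝ × ℝ | q.2 ∈ s ∧ q.1 ≤ q.2} :=
    (measurable_snd hs).inter (measurableSet_le measurable_fst measurable_snd)
  rw [Measure.prod_apply_symm hmeas, ← lintegral_indicator hs]
  congr 1
  ext w
  by_cases hw : w ∈ s <;>
    simp [Set.indicator, hw, Set.preimage, Set.Iic]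

lemma aux_diag (μ ν : Measure ℝ) [SFinite ν] (h : ∀ x : ℝ, ν {x} = 0) :
    (μ.prod ν) {q : ℝ × ℝ | q.1 = q.2} = 0 := by
  have hmeas : MeasurableSet {q : ℝ × ℝ | q.1 = q.2} :=
    measurableSet_eq_fun measurable_fst measurable_snd
  rw [Measure.prod_apply hmeas]
  have hpre : ∀ z : ℝ, (Prod.mk z ⁻¹' {q : ℝ × ℝ | q.1 = q.2}) = {z} := by
    intro z; ext y; simp [eq_comm]
  simp [hpre, h]

lemma aux_decomp (μ ν : Measure ℝ) [SFinite μ] [SFinite ν]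
    (hdiag : (μ.prod ν) {q : ℝ × ℝ | q.1 = q.2} = 0)
    (hle0 : μ (Set.Iic 0) = 0) (t : ℝ) :
    (μ.prod ν) {q : ℝ × ℝ | q.1 ∈ Set.Ioc 0 t ∧ q.1 < q.2}
      = (μ.prod ν) {q : ℝ × ℝ | q.2 ∈ Set.Ioc 0 t ∧ q.1 ≤ q.2}
        + μ (Set.Ioc 0 t) * ν (Set.Ioi t) := by
  have hnull : (μ.prod ν) {q : ℝ × ℝ | q.1 ≤ 0} = 0 := by
    have he : {q : ℝ × ℝ | q.1 ≤ 0} = Set.Iic 0 ×ˢ Set.univ := by ext q; simp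
    rw [he, Measure.prod_prod, hle0, zero_mul]
  set T' : Set (ℝ × ℝ) := {q | 0 < q.1 ∧ q.1 < q.2 ∧ q.2 ≤ t} with hT'
  have hS_eq : {q : ℝ × ℝ | q.1 ∈ Set.Ioc 0 t ∧ q.1 < q.2}
      = T' ∪ (Set.Ioc 0 t ×ˢ Set.Ioi t) := by
    ext ⟨z, w⟩
    simp only [hT', Set.mem_Ioc, Set.mem_Ioi, Set.mem_union, Set.mem_prod, Set.mem_setOf_eq]
    constructor
    · rintro ⟨⟨h1, h2⟩, h3⟩
      rcases le_or_gt w t with h | h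
      · exact Or.inl ⟨h1, h3, h⟩
      · exact Or.inr ⟨⟨h1, h2⟩, h⟩
    · rintro (⟨h1, h2, h3⟩ | ⟨⟨h1, h2⟩, h3⟩)
      · exact ⟨⟨h1, le_trans h2.le h3⟩, h2⟩
      · exact ⟨⟨h1, h2⟩, lt_of_le_of_lt h2 h3⟩
  have hdisj : Disjoint T' (Set.Ioc 0 t ×ˢ Set.Ioi t) := by
    rw [Set.disjoint_left]
    rintro ⟨z, w⟩ ⟨_, _, h3⟩ ⟨_, h4⟩
    simp only [Set.mem_Ioi] at h4
    exact absurd h4 (not_lt.2 h3)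
  have hmeasR : MeasurableSet (Set.Ioc (0:ℝ) t ×ˢ Set.Ioi t) :=
    measurableSet_Ioc.prod measurableSet_Ioi
  have hstep1 : (μ.prod ν) {q : ℝ × ℝ | q.1 ∈ Set.Ioc 0 t ∧ q.1 < q.2}
      = (μ.prod ν) T' + μ (Set.Ioc 0 t) * ν (Set.Ioi t) := by
    rw [hS_eq, measure_union hdisj hmeasR, Measure.prod_prod]
  have hsub1 : T' ⊆ {q : ℝ × ℝ | q.2 ∈ Set.Ioc 0 t ∧ q.1 ≤ q.2} := by
    rintro ⟨z, w⟩ ⟨h1, h2, h3⟩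
    exact ⟨⟨lt_trans h1 h2, h3⟩, h2.le⟩
  have hsub2 : {q : ℝ × ℝ | q.2 ∈ Set.Ioc 0 t ∧ q.1 ≤ q.2} \ T'
      ⊆ {q : ℝ × ℝ | q.1 ≤ 0} ∪ {q : ℝ × ℝ | q.1 = q.2} := by
    rintro ⟨z, w⟩ ⟨⟨⟨hw0, hwt⟩, hzw⟩, hnot⟩
    simp only [hT', Set.mem_setOf_eq, not_and, not_lt] at hnot
    rcases le_or_gt z 0 with h | h
    · exact Or.inl h
    · have h2 : ¬ z < w := fun hlt => (hnot h) hlt hwt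
      exact Or.inr (le_antisymm hzw (not_lt.1 h2))
  have hTnull : (μ.prod ν) ({q : ℝ × ℝ | q.2 ∈ Set.Ioc 0 t ∧ q.1 ≤ q.2} \ T') = 0 :=
    measure_mono_null hsub2 (measure_union_null hnull hdiag)
  have hTle : (μ.prod ν) {q : ℝ × ℝ | q.2 ∈ Set.Ioc 0 t ∧ q.1 ≤ q.2} ≤ (μ.prod ν) T' := by
    calc (μ.prod ν) {q : ℝ × ℝ | q.2 ∈ Set.Ioc 0 t ∧ q.1 ≤ q.2}
        ≤ (μ.prod ν) (({q : ℝ × ℝ | q.2 ∈ Set.Ioc 0 t ∧ q.1 ≤ q.2} \ T') ∪ T') :=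
          measure_mono (Set.subset_diff_union _ _)
      _ ≤ (μ.prod ν) ({q : ℝ × ℝ | q.2 ∈ Set.Ioc 0 t ∧ q.1 ≤ q.2} \ T') + (μ.prod ν) T' :=
          measure_union_le _ _
      _ = (μ.prod ν) T' := by rw [hTnull, zero_add]
  have hTeq : (μ.prod ν) T' = (μ.prod ν) {q : ℝ × ℝ | q.2 ∈ Set.Ioc 0 t ∧ q.1 ≤ q.2} :=
    le_antisymm (measure_mono hsub1) hTle
  rw [hstep1, hTeq]

lemma aux_decomp_top (μ ν : Measure ℝ) [SFinite μ] [SFinite ν]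
    (hdiag : (μ.prod ν) {q : ℝ × ℝ | q.1 = q.2} = 0)
    (hle0 : μ (Set.Iic 0) = 0) :
    (μ.prod ν) {q : ℝ × ℝ | q.1 ∈ Set.Ioi 0 ∧ q.1 < q.2}
      = (μ.prod ν) {q : ℝ × ℝ | q.2 ∈ Set.Ioi 0 ∧ q.1 ≤ q.2} := by
  have hnull : (μ.prod ν) {q : ℝ × ℝ | q.1 ≤ 0} = 0 := by
    have he : {q : ℝ × ℝ | q.1 ≤ 0} = Set.Iic 0 ×ˢ Set.univ := by ext q; simp
    rw [he, Measure.prod_prod, hle0, zero_mul]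
  have hsub1 : {q : ℝ × ℝ | q.1 ∈ Set.Ioi 0 ∧ q.1 < q.2}
      ⊆ {q : ℝ × ℝ | q.2 ∈ Set.Ioi 0 ∧ q.1 ≤ q.2} := by
    rintro ⟨z, w⟩ ⟨h1, h2⟩
    exact ⟨lt_trans h1 h2, h2.le⟩
  have hsub2 : {q : ℝ × ℝ | q.2 ∈ Set.Ioi 0 ∧ q.1 ≤ q.2} \ {q : ℝ × ℝ | q.1 ∈ Set.Ioi 0 ∧ q.1 < q.2}
      ⊆ {q : ℝ × ℝ | q.1 ≤ 0} ∪ {q : ℝ × ℝ | q.1 = q.2} := by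
    rintro ⟨z, w⟩ ⟨⟨hw0, hzw⟩, hnot⟩
    simp only [Set.mem_setOf_eq, Set.mem_Ioi, not_and, not_lt] at hnot
    rcases le_or_gt z 0 with h | h
    · exact Or.inl h
    · exact Or.inr (le_antisymm hzw (hnot h))
  have hTnull : (μ.prod ν) ({q : ℝ × ℝ | q.2 ∈ Set.Ioi 0 ∧ q.1 ≤ q.2}
      \ {q : ℝ × ℝ | q.1 ∈ Set.Ioi 0 ∧ q.1 < q.2}) = 0 :=
    measure_mono_null hsub2 (measure_union_null hnull hdiag)
  refine le_antisymm (measure_mono hsub1) ?_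
  calc (μ.prod ν) {q : ℝ × ℝ | q.2 ∈ Set.Ioi 0 ∧ q.1 ≤ q.2}
      ≤ (μ.prod ν) (({q : ℝ × ℝ | q.2 ∈ Set.Ioi 0 ∧ q.1 ≤ q.2}
          \ {q : ℝ × ℝ | q.1 ∈ Set.Ioi 0 ∧ q.1 < q.2})
          ∪ {q : ℝ × ℝ | q.1 ∈ Set.Ioi 0 ∧ q.1 < q.2}) :=
        measure_mono (Set.subset_diff_union _ _)
    _ ≤ _ + _ := measure_union_le _ _
    _ = (μ.prod ν) {q : ℝ × ℝ | q.1 ∈ Set.Ioi 0 ∧ q.1 < q.2} := by rw [hTnull, zero_add]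

lemma aux_bridge (μ : Measure ℝ) (f : ℝ → ℝ) (hf : Continuous f)
    (hnn : ∀ x, 0 ≤ f x) (s : Set ℝ) :
    ∫ x in s, f x ∂μ = (∫⁻ x in s, ENNReal.ofReal (f x) ∂μ).toReal := by
  rw [integral_eq_lintegral_of_nonneg_ae (Filter.Eventually.of_forall hnn)
    hf.aestronglyMeasurable.restrict]

lemma aux_fin (μ : Measure ℝ) [IsFiniteMeasure μ] (f : ℝ → ℝ) (hle : ∀ x, f x ≤ 1)
    (s : Set ℝ) : ∫⁻ x in s, ENNReal.ofReal (f x) ∂μ ≠ ⊤ := by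
  have hb : ∫⁻ x in s, ENNReal.ofReal (f x) ∂μ ≤ μ s := by
    calc ∫⁻ x in s, ENNReal.ofReal (f x) ∂μ ≤ ∫⁻ _ in s, 1 ∂μ :=
          lintegral_mono fun x => ENNReal.ofReal_le_one.2 (hle x)
      _ = μ s := by simp
  exact ne_top_of_le_ne_top (measure_ne_top μ s) hb

end AuxLemmas

/-- Under the truncation model with both second-order conditions holding,
`C(t)/Ḡ(t) → 1` as `t → ∞`, where `C := F − G` and `Ḡ := 1 − G`. -/
theorem C_over_Gbar_tendsto_one
    (FF GG : ℝ → ℝ) (γ₁ γ₂ : ℝ) (hγ₁ : 0 < γ₁) (hγ₂ : 0 < γ₂)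
    (hFFmono : Monotone FF) (hFFcont : Continuous FF)
    (hFF0 : ∀ x ≤ (0 : ℝ), FF x = 0) (hFFtop : Tendsto FF atTop (nhds 1))
    (hGGmono : Monotone GG) (hGGcont : Continuous GG)
    (hGG0 : ∀ x ≤ (0 : ℝ), GG x = 0) (hGGtop : Tendsto GG atTop (nhds 1))
    (hFFlt : ∀ z : ℝ, FF z < 1) (hGGlt : ∀ z : ℝ, GG z < 1)
    (hRVF : ∀ x > (0 : ℝ),
      Tendsto (fun z => (1 - FF (x * z)) / (1 - FF z)) atTop (nhds (x ^ (-(1 / γ₁)))))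
    (hRVG : ∀ x > (0 : ℝ),
      Tendsto (fun z => (1 - GG (x * z)) / (1 - GG z)) atTop (nhds (x ^ (-(1 / γ₂)))))
    -- second-order condition for 𝐅
    (τ₁ : ℝ) (hτ₁ : τ₁ < 0) (AF : ℝ → ℝ) (hAF0 : Tendsto AF atTop (nhds 0))
    (hAFsign : (∀ᶠ t in atTop, 0 < AF t) ∨ (∀ᶠ t in atTop, AF t < 0))
    (hAFrv : ∀ x > (0 : ℝ), Tendsto (fun t => |AF (x * t)| / |AF t|) atTop (nhds (x ^ τ₁)))
    (hSOF : ∀ x > (0 : ℝ),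
      Tendsto (fun t => (tailQuantile FF (t * x) / tailQuantile FF t - x ^ γ₁) / AF t)
        atTop (nhds (x ^ γ₁ * ((x ^ τ₁ - 1) / τ₁))))
    -- second-order condition for 𝐆
    (τ₂ : ℝ) (hτ₂ : τ₂ < 0) (AG : ℝ → ℝ) (hAG0 : Tendsto AG atTop (nhds 0))
    (hAGsign : (∀ᶠ t in atTop, 0 < AG t) ∨ (∀ᶠ t in atTop, AG t < 0))
    (hAGrv : ∀ x > (0 : ℝ), Tendsto (fun t => |AG (x * t)| / |AG t|) atTop (nhds (x ^ τ₂)))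
    (hSOG : ∀ x > (0 : ℝ),
      Tendsto (fun t => (tailQuantile GG (t * x) / tailQuantile GG t - x ^ γ₂) / AG t)
        atTop (nhds (x ^ γ₂ * ((x ^ τ₂ - 1) / τ₂))))
    -- observed marginals
    (μF μG : Measure ℝ)
    (hμF : ∀ b, μF (Set.Iic b) = ENNReal.ofReal (FF b))
    (hμG : ∀ b, μG (Set.Iic b) = ENNReal.ofReal (GG b))
    (p : ℝ) (hp : p = ∫ z in Set.Ioi (0 : ℝ), (1 - GG z) ∂μF) (hppos : 0 < p)
    (F G : ℝ → ℝ)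
    (hF : ∀ x, F x = p⁻¹ * ∫ z in Set.Ioc (0 : ℝ) x, (1 - GG z) ∂μF)
    (hG : ∀ y, G y = p⁻¹ * ∫ z in Set.Ioc (0 : ℝ) y, FF z ∂μG) :
    Tendsto (fun t => (F t - G t) / (1 - G t)) atTop (nhds 1) := by
  have hFFnn := auxC_nonneg FF hFF0 hFFmono
  have hGGnn := auxC_nonneg GG hGG0 hGGmono
  have hFFle : ∀ x, FF x ≤ 1 := fun x => (hFFlt x).le
  have hGGle : ∀ x, GG x ≤ 1 := fun x => (hGGlt x).le
  haveI : IsProbabilityMeasure μF := ⟨auxC_univ FF μF hμF hFFtop⟩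
  haveI : IsProbabilityMeasure μG := ⟨auxC_univ GG μG hμG hGGtop⟩
  have hμF0 : μF (Set.Iic 0) = 0 := by rw [hμF, hFF0 0 le_rfl, ENNReal.ofReal_zero]
  have hdiag := aux_diag μF μG (auxC_singleton GG μG hμG hGG0 hGGmono hGGcont)
  have hμGIoi : ∀ a, μG (Set.Ioi a) = ENNReal.ofReal (1 - GG a) :=
    auxC_Ioi GG μG hμG hGG0 hGGmono hGGtop
  have hGbcont : Continuous (fun z => 1 - GG z) := continuous_const.sub hGGcont
  have hGbnn : ∀ z, 0 ≤ 1 - GG z := fun z => by linarith [hGGle z]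
  have hGble : ∀ z, (1:ℝ) - GG z ≤ 1 := fun z => by linarith [hGGnn z]
  -- the key ENNReal identity for finite t
  have hE : ∀ t : ℝ, 0 < t →
      ∫⁻ z in Set.Ioc 0 t, ENNReal.ofReal (1 - GG z) ∂μF
        = (∫⁻ w in Set.Ioc 0 t, ENNReal.ofReal (FF w) ∂μG)
          + ENNReal.ofReal (FF t) * ENNReal.ofReal (1 - GG t) := by
    intro t ht
    have e1 : ∫⁻ z in Set.Ioc 0 t, ENNReal.ofReal (1 - GG z) ∂μF
        = ∫⁻ z in Set.Ioc 0 t, μG (Set.Ioi z) ∂μF :=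
      lintegral_congr fun z => (hμGIoi z).symm
    have e2 : ∫⁻ w in Set.Ioc 0 t, μF (Set.Iic w) ∂μG
        = ∫⁻ w in Set.Ioc 0 t, ENNReal.ofReal (FF w) ∂μG :=
      lintegral_congr fun w => hμF w
    have h4 : μF (Set.Ioc 0 t) = ENNReal.ofReal (FF t) := by
      rw [auxC_Ioc FF μF hμF hFF0 hFFmono ht.le, hFF0 0 le_rfl, sub_zero]
    rw [e1, ← aux_sliceF μF μG (Set.Ioc 0 t) measurableSet_Ioc,
      aux_decomp μF μG hdiag hμF0 t,
      aux_sliceG μF μG (Set.Ioc 0 t) measurableSet_Ioc, e2, h4, hμGIoi t]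
  -- the key ENNReal identity globally
  have hEtop : ∫⁻ z in Set.Ioi 0, ENNReal.ofReal (1 - GG z) ∂μF
      = ∫⁻ w in Set.Ioi 0, ENNReal.ofReal (FF w) ∂μG := by
    have e1 : ∫⁻ z in Set.Ioi 0, ENNReal.ofReal (1 - GG z) ∂μF
        = ∫⁻ z in Set.Ioi 0, μG (Set.Ioi z) ∂μF :=
      lintegral_congr fun z => (hμGIoi z).symm
    have e2 : ∫⁻ w in Set.Ioi 0, μF (Set.Iic w) ∂μG
        = ∫⁻ w in Set.Ioi 0, ENNReal.ofReal (FF w) ∂μG :=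
      lintegral_congr fun w => hμF w
    rw [e1, ← aux_sliceF μF μG (Set.Ioi 0) measurableSet_Ioi,
      aux_decomp_top μF μG hdiag hμF0,
      aux_sliceG μF μG (Set.Ioi 0) measurableSet_Ioi, e2]
  -- real versions
  have hI1 : ∀ t : ℝ, 0 < t → ∫ z in Set.Ioc 0 t, (1 - GG z) ∂μF
      = (∫ w in Set.Ioc 0 t, FF w ∂μG) + FF t * (1 - GG t) := by
    intro t ht
    rw [aux_bridge μF _ hGbcont hGbnn _, aux_bridge μG FF hFFcont hFFnn _, hE t ht,
      ENNReal.toReal_add (aux_fin μG FF hFFle _)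
        (ENNReal.mul_ne_top ENNReal.ofReal_ne_top ENNReal.ofReal_ne_top),
      ENNReal.toReal_mul, ENNReal.toReal_ofReal (hFFnn t), ENNReal.toReal_ofReal (hGbnn t)]
  have hI2 : p = ∫ w in Set.Ioi 0, FF w ∂μG := by
    rw [hp, aux_bridge μF _ hGbcont hGbnn _, aux_bridge μG FF hFFcont hFFnn _, hEtop]
  -- numerator identity
  have hC : ∀ t : ℝ, 0 < t → F t - G t = p⁻¹ * (FF t * (1 - GG t)) := by
    intro t ht
    rw [hF t, hG t, hI1 t ht]
    ring
  -- denominator identity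
  have hintFF : Integrable FF μG := by
    refine (integrable_const (1:ℝ)).mono' hFFcont.aestronglyMeasurable
      (Filter.Eventually.of_forall fun x => ?_)
    rw [Real.norm_eq_abs, abs_of_nonneg (hFFnn x)]
    exact hFFle x
  have hGsplit : ∀ t : ℝ, 0 < t → 1 - G t = p⁻¹ * ∫ w in Set.Ioi t, FF w ∂μG := by
    intro t ht
    have hdisj : Disjoint (Set.Ioc (0:ℝ) t) (Set.Ioi t) := by
      rw [Set.disjoint_left]
      rintro x ⟨_, hx2⟩ hx3
      exact absurd (Set.mem_Ioi.1 hx3) (not_lt.2 hx2)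
    have hsplit : ∫ w in Set.Ioi 0, FF w ∂μG
        = (∫ w in Set.Ioc 0 t, FF w ∂μG) + ∫ w in Set.Ioi t, FF w ∂μG := by
      rw [← MeasureTheory.setIntegral_union hdisj measurableSet_Ioi
        hintFF.integrableOn hintFF.integrableOn, Set.Ioc_union_Ioi_eq_Ioi ht.le]
    have hpe : p = (∫ w in Set.Ioc 0 t, FF w ∂μG) + ∫ w in Set.Ioi t, FF w ∂μG :=
      hI2.trans hsplit
    have hpne : p ≠ 0 := ne_of_gt hppos
    rw [hG t]
    field_simp
    linarith [hpe]
  -- bounds for the tail integral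
  have hIlow : ∀ t : ℝ, FF t * (1 - GG t) ≤ ∫ w in Set.Ioi t, FF w ∂μG := by
    intro t
    have hconst : ∫ _ in Set.Ioi t, FF t ∂μG = FF t * (1 - GG t) := by
      rw [setIntegral_const, measureReal_def, hμGIoi t, ENNReal.toReal_ofReal (hGbnn t), smul_eq_mul, mul_comm]
    rw [← hconst]
    refine setIntegral_mono_on (integrableOn_const (measure_lt_top _ _).ne)
      hintFF.integrableOn measurableSet_Ioi fun w hw => hFFmono (le_of_lt hw)
  have hIhigh : ∀ t : ℝ, ∫ w in Set.Ioi t, FF w ∂μG ≤ 1 - GG t := by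
    intro t
    have hconst : ∫ _ in Set.Ioi t, (1:ℝ) ∂μG = 1 - GG t := by
      rw [setIntegral_const, measureReal_def, hμGIoi t, ENNReal.toReal_ofReal (hGbnn t), smul_eq_mul, mul_one]
    rw [← hconst]
    exact setIntegral_mono_on hintFF.integrableOn
      (integrableOn_const (measure_lt_top _ _).ne) measurableSet_Ioi
      fun w _ => hFFle w
  -- conclude by squeezing
  have hmain : ∀ᶠ t in atTop,
      FF t ≤ (F t - G t) / (1 - G t) ∧ (F t - G t) / (1 - G t) ≤ 1 := by
    filter_upwards [eventually_gt_atTop (0:ℝ),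
      hFFtop.eventually (eventually_ge_nhds (by norm_num : (1:ℝ)/2 < 1))] with t ht hFFt
    have hGb : 0 < 1 - GG t := by linarith [hGGlt t]
    have hFFpos : 0 < FF t := by linarith
    have hIpos : 0 < ∫ w in Set.Ioi t, FF w ∂μG :=
      lt_of_lt_of_le (by positivity) (hIlow t)
    have hr : (F t - G t) / (1 - G t)
        = (FF t * (1 - GG t)) / (∫ w in Set.Ioi t, FF w ∂μG) := by
      rw [hC t ht, hGsplit t ht, mul_div_mul_left _ _ (inv_ne_zero (ne_of_gt hppos))]
    constructor
    · rw [hr, le_div_iff₀ hIpos]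
      calc FF t * ∫ w in Set.Ioi t, FF w ∂μG ≤ FF t * (1 - GG t) :=
            mul_le_mul_of_nonneg_left (hIhigh t) (hFFnn t)
        _ = FF t * (1 - GG t) := rfl
    · rw [hr, div_le_one hIpos]
      exact hIlow t
  exact tendsto_of_tendsto_of_tendsto_of_le_of_le' hFFtop tendsto_const_nhds
    (hmain.mono fun t h => h.1) (hmain.mono fun t h => h.2)
end

section
/- Under the truncation model with both second-order conditions holding, for each 0 < ν ≤ 1 one has t^{1/ν}·C(U_F(t)) → ∞ as t → ∞, where C(z) := F(z) − G(z) and U_F(t) := F^←(1−1/t) is the tail quantile function of F. -/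
open MeasureTheory Filter Set Real

variable {K : ℝ → ℝ} {μ : Measure ℝ}

lemma cdf_nonneg (hKm : Monotone K) (hK0 : ∀ x ≤ (0:ℝ), K x = 0) (x : ℝ) : 0 ≤ K x := by
  rcases le_or_gt x 0 with h | h
  · rw [hK0 x h]
  · rw [← hK0 0 le_rfl]; exact hKm h.le

lemma cdf_le_one (hKm : Monotone K) (hKtop : Tendsto K atTop (nhds 1)) (x : ℝ) : K x ≤ 1 :=
  Monotone.ge_of_tendsto hKm hKtop x

lemma cdf_univ (hKtop : Tendsto K atTop (nhds 1))
    (hμ : ∀ b, μ (Iic b) = ENNReal.ofReal (K b)) : μ univ = 1 := by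
  have h1 : Tendsto (fun b => μ (Iic b)) atTop (nhds (μ univ)) := tendsto_measure_Iic_atTop μ
  have h2 : Tendsto (fun b => μ (Iic b)) atTop (nhds 1) := by
    simp only [hμ]
    simpa [Function.comp_def] using (ENNReal.continuous_ofReal.tendsto 1).comp hKtop
  exact tendsto_nhds_unique h1 h2

lemma cdf_finite (hKtop : Tendsto K atTop (nhds 1))
    (hμ : ∀ b, μ (Iic b) = ENNReal.ofReal (K b)) : IsFiniteMeasure μ :=
  ⟨by rw [cdf_univ hKtop hμ]; exact ENNReal.one_lt_top⟩

lemma cdf_Ioc (hKm : Monotone K) (hK0 : ∀ x ≤ (0:ℝ), K x = 0)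
    (hμ : ∀ b, μ (Iic b) = ENNReal.ofReal (K b)) {a b : ℝ} (hab : a ≤ b) :
    μ (Ioc a b) = ENNReal.ofReal (K b - K a) := by
  have h : Ioc a b = Iic b \ Iic a := (Iic_sdiff_Iic).symm
  rw [h, measure_diff (Iic_subset_Iic.2 hab) measurableSet_Iic.nullMeasurableSet
    (by rw [hμ]; exact ENNReal.ofReal_ne_top), hμ, hμ,
    ← ENNReal.ofReal_sub _ (cdf_nonneg hKm hK0 a)]

lemma cdf_Ioc0 (hKm : Monotone K) (hK0 : ∀ x ≤ (0:ℝ), K x = 0)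
    (hμ : ∀ b, μ (Iic b) = ENNReal.ofReal (K b)) (y : ℝ) :
    μ (Ioc 0 y) = ENNReal.ofReal (K y) := by
  rcases le_or_gt y 0 with h | h
  · rw [Ioc_eq_empty (by exact fun hy => absurd h (not_le.2 hy)), measure_empty,
      hK0 y h]
    simp
  · rw [cdf_Ioc hKm hK0 hμ h.le, hK0 0 le_rfl, sub_zero]

lemma cdf_Ioi (hKm : Monotone K) (hK0 : ∀ x ≤ (0:ℝ), K x = 0) (hKtop : Tendsto K atTop (nhds 1))
    (hμ : ∀ b, μ (Iic b) = ENNReal.ofReal (K b)) (z : ℝ) :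
    μ (Ioi z) = ENNReal.ofReal (1 - K z) := by
  have huniv : μ univ = 1 := cdf_univ hKtop hμ
  have h : Ioi z = (Iic z)ᶜ := by simp
  rw [h, measure_compl measurableSet_Iic (by rw [hμ]; exact ENNReal.ofReal_ne_top), huniv, hμ,
    ENNReal.ofReal_sub _ (cdf_nonneg hKm hK0 z), ENNReal.ofReal_one]

lemma cdf_singleton (hKm : Monotone K) (hK0 : ∀ x ≤ (0:ℝ), K x = 0) (hKc : Continuous K)
    (hμ : ∀ b, μ (Iic b) = ENNReal.ofReal (K b)) (x : ℝ) : μ {x} = 0 := by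
  have hb : ∀ ε : ℝ, 0 < ε → μ {x} ≤ ENNReal.ofReal (K x - K (x - ε)) := by
    intro ε hε
    rw [← cdf_Ioc hKm hK0 hμ (by linarith : x - ε ≤ x)]
    refine measure_mono (fun y hy => ?_)
    simp only [mem_singleton_iff] at hy
    subst hy
    exact ⟨by linarith, le_rfl⟩
  by_contra hne
  set c := (μ {x}).toReal with hc
  have hfin : μ {x} ≠ ⊤ :=
    ne_top_of_le_ne_top ENNReal.ofReal_ne_top (hb 1 one_pos)
  have hcpos : 0 < c := ENNReal.toReal_pos hne hfin
  obtain ⟨δ, hδ, hδ'⟩ := Metric.continuousAt_iff.mp (hKc.continuousAt (x := x)) c hcpos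
  have h2 : K x - K (x - δ/2) < c := by
    have hd : dist (x - δ/2) x < δ := by
      rw [Real.dist_eq, abs_of_nonpos (by linarith)]; linarith
    have := abs_lt.mp ((Real.dist_eq _ _) ▸ hδ' hd)
    linarith [this.1, this.2]
  have hlt : μ {x} < μ {x} := by
    calc μ {x} ≤ ENNReal.ofReal (K x - K (x - δ/2)) := hb (δ/2) (by linarith)
    _ < ENNReal.ofReal c := (ENNReal.ofReal_lt_ofReal_iff hcpos).2 h2
    _ = μ {x} := ENNReal.ofReal_toReal hfin
  exact absurd hlt (lt_irrefl _)

lemma intOn_of_bounded (μ : Measure ℝ) [IsFiniteMeasure μ] {f : ℝ → ℝ} (hf : Continuous f)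
    (C : ℝ) (hC : ∀ x, |f x| ≤ C) (s : Set ℝ) : IntegrableOn f s μ :=
  Integrable.mono' (integrable_const C) hf.aestronglyMeasurable.restrict (ae_of_all _ hC)

section
variable {FF GG : ℝ → ℝ} {μF μG : Measure ℝ}

lemma key_identity
    (hFFmono : Monotone FF) (hFFcont : Continuous FF)
    (hFF0 : ∀ x ≤ (0 : ℝ), FF x = 0) (hFFtop : Tendsto FF atTop (nhds 1))
    (hGGmono : Monotone GG) (hGGcont : Continuous GG)
    (hGG0 : ∀ x ≤ (0 : ℝ), GG x = 0) (hGGtop : Tendsto GG atTop (nhds 1))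
    (hμF : ∀ b, μF (Set.Iic b) = ENNReal.ofReal (FF b))
    (hμG : ∀ b, μG (Set.Iic b) = ENNReal.ofReal (GG b))
    (z : ℝ) (hz : 0 ≤ z) :
    (∫ x in Set.Ioc (0:ℝ) z, (1 - GG x) ∂μF) - (∫ y in Set.Ioc (0:ℝ) z, FF y ∂μG)
      = FF z * (1 - GG z) := by
  haveI hFfin : IsFiniteMeasure μF := cdf_finite hFFtop hμF
  haveI hGfin : IsFiniteMeasure μG := cdf_finite hGGtop hμG
  -- the two product sets
  set S1 : Set (ℝ × ℝ) := {q | 0 < q.1 ∧ q.1 < q.2 ∧ q.2 ≤ z} with hS1def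
  set S2 : Set (ℝ × ℝ) := {q | 0 < q.1 ∧ q.1 ≤ q.2 ∧ q.2 ≤ z} with hS2def
  set D : Set (ℝ × ℝ) := {q | q.1 = q.2} with hDdef
  have hS1m : MeasurableSet S1 := by
    refine MeasurableSet.inter ?_ (MeasurableSet.inter ?_ ?_)
    · exact measurable_fst measurableSet_Ioi
    · exact measurableSet_lt measurable_fst measurable_snd
    · exact measurable_snd measurableSet_Iic
  have hS2m : MeasurableSet S2 := by
    refine MeasurableSet.inter ?_ (MeasurableSet.inter ?_ ?_)
    · exact measurable_fst measurableSet_Ioi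
    · exact measurableSet_le measurable_fst measurable_snd
    · exact measurable_snd measurableSet_Iic
  have hDm : MeasurableSet D := measurableSet_eq_fun measurable_fst measurable_snd
  -- measure of D is zero
  have hD0 : (μF.prod μG) D = 0 := by
    rw [Measure.prod_apply hDm]
    have : ∀ x : ℝ, μG (Prod.mk x ⁻¹' D) = 0 := by
      intro x
      have : Prod.mk x ⁻¹' D = {x} := by
        ext y; simp [hDdef, eq_comm]
      rw [this]
      exact cdf_singleton hGGmono hGG0 hGGcont hμG x
    simp only [this, lintegral_zero]
  -- S1 and S2 have the same measure
  have hS1S2 : (μF.prod μG) S1 = (μF.prod μG) S2 := by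
    refine le_antisymm (measure_mono (fun q hq => ⟨hq.1, hq.2.1.le, hq.2.2⟩)) ?_
    calc (μF.prod μG) S2 ≤ (μF.prod μG) (S1 ∪ D) := by
          refine measure_mono (fun q hq => ?_)
          rcases lt_or_eq_of_le hq.2.1 with h | h
          · exact Or.inl ⟨hq.1, h, hq.2.2⟩
          · exact Or.inr h
    _ ≤ (μF.prod μG) S1 + (μF.prod μG) D := measure_union_le _ _
    _ = (μF.prod μG) S1 := by rw [hD0, add_zero]
  -- prod measure of S1 as iterated integral over x
  have hS1val : (μF.prod μG) S1 = ∫⁻ x in Set.Ioc (0:ℝ) z, ENNReal.ofReal (GG z - GG x) ∂μF := by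
    rw [Measure.prod_apply hS1m]
    have hslice : ∀ x : ℝ, μG (Prod.mk x ⁻¹' S1)
        = (Set.Ioc (0:ℝ) z).indicator (fun x => ENNReal.ofReal (GG z - GG x)) x := by
      intro x
      rcases le_or_gt x 0 with h | h
      · have : Prod.mk x ⁻¹' S1 = ∅ := by
          ext y; simp only [hS1def, mem_preimage, mem_setOf_eq, mem_empty_iff_false, iff_false]
          intro hc; exact absurd h (not_le.2 hc.1)
        rw [this, measure_empty]
        exact (Set.indicator_of_notMem (s := Set.Ioc (0:ℝ) z) (fun hc => absurd h (not_le.2 hc.1)) (fun x => ENNReal.ofReal (GG z - GG x))).symm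
      · rcases le_or_gt x z with h2 | h2
        · have : Prod.mk x ⁻¹' S1 = Set.Ioc x z := by
            ext y; simp only [hS1def, mem_preimage, mem_setOf_eq, mem_Ioc]
            exact ⟨fun hc => ⟨hc.2.1, hc.2.2⟩, fun hc => ⟨h, hc.1, hc.2⟩⟩
          rw [this, cdf_Ioc hGGmono hGG0 hμG h2]
          exact (Set.indicator_of_mem (show x ∈ Set.Ioc (0:ℝ) z from ⟨h, h2⟩) (fun x => ENNReal.ofReal (GG z - GG x))).symm
        · have : Prod.mk x ⁻¹' S1 = ∅ := by
            ext y; simp only [hS1def, mem_preimage, mem_setOf_eq, mem_empty_iff_false, iff_false]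
            intro hc; exact absurd (hc.2.1.trans_le hc.2.2) (not_lt.2 h2.le)
          rw [this, measure_empty]
          exact (Set.indicator_of_notMem (s := Set.Ioc (0:ℝ) z) (fun hc => absurd h2 (not_lt.2 hc.2)) (fun w => ENNReal.ofReal (GG z - GG w))).symm
    simp only [hslice]
    rw [lintegral_indicator measurableSet_Ioc]
  -- prod measure of S2 as iterated integral over y
  have hS2val : (μF.prod μG) S2 = ∫⁻ y in Set.Ioc (0:ℝ) z, ENNReal.ofReal (FF y) ∂μG := by
    rw [Measure.prod_apply_symm hS2m]
    have hslice : ∀ y : ℝ, μF ((fun x => (x, y)) ⁻¹' S2)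
        = (Set.Ioc (0:ℝ) z).indicator (fun y => ENNReal.ofReal (FF y)) y := by
      intro y
      rcases le_or_gt y z with h2 | h2
      · have : (fun x => (x, y)) ⁻¹' S2 = Set.Ioc 0 y := by
          ext x; simp only [hS2def, mem_preimage, mem_setOf_eq, mem_Ioc]
          exact ⟨fun hc => ⟨hc.1, hc.2.1⟩, fun hc => ⟨hc.1, hc.2, h2⟩⟩
        rw [this, cdf_Ioc0 hFFmono hFF0 hμF y]
        rcases le_or_gt y 0 with h3 | h3
        · rw [hFF0 y h3]
          simp only [ENNReal.ofReal_zero]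
          exact (Set.indicator_of_notMem (s := Set.Ioc (0:ℝ) z) (fun hc => absurd h3 (not_le.2 hc.1)) (fun y => ENNReal.ofReal (FF y))).symm
        · exact (Set.indicator_of_mem (show y ∈ Set.Ioc (0:ℝ) z from ⟨h3, h2⟩) (fun y => ENNReal.ofReal (FF y))).symm
      · have : (fun x => (x, y)) ⁻¹' S2 = ∅ := by
          ext x; simp only [hS2def, mem_preimage, mem_setOf_eq, mem_empty_iff_false, iff_false]
          intro hc; exact absurd hc.2.2 (not_le.2 h2)
        rw [this, measure_empty]
        exact (Set.indicator_of_notMem (s := Set.Ioc (0:ℝ) z) (fun hc => absurd h2 (not_lt.2 hc.2)) (fun w => ENNReal.ofReal (FF w))).symm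
    simp only [hslice]
    rw [lintegral_indicator measurableSet_Ioc]
  -- convert Bochner integrals
  have hGG01 : ∀ x, 0 ≤ GG x := cdf_nonneg hGGmono hGG0
  have hGGle1 : ∀ x, GG x ≤ 1 := cdf_le_one hGGmono hGGtop
  have hFF01 : ∀ x, 0 ≤ FF x := cdf_nonneg hFFmono hFF0
  have hI2 : (∫ y in Set.Ioc (0:ℝ) z, FF y ∂μG)
      = ((μF.prod μG) S2).toReal := by
    rw [hS2val, integral_eq_lintegral_of_nonneg_ae (ae_of_all _ (fun y => hFF01 y))
      hFFcont.aestronglyMeasurable.restrict]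
  have hJ : (∫ x in Set.Ioc (0:ℝ) z, (GG z - GG x) ∂μF)
      = ((μF.prod μG) S1).toReal := by
    rw [hS1val, integral_eq_lintegral_of_nonneg_ae
      ((ae_restrict_iff' measurableSet_Ioc).2
        (ae_of_all _ (fun x hx => sub_nonneg.2 (hGGmono hx.2))))
      ((continuous_const.sub hGGcont).aestronglyMeasurable.restrict)]
  -- decompose the first integral
  have hsplit : (∫ x in Set.Ioc (0:ℝ) z, (1 - GG x) ∂μF)
      = (∫ x in Set.Ioc (0:ℝ) z, (GG z - GG x) ∂μF) + FF z * (1 - GG z) := by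
    have hfun : (fun x => 1 - GG x) = (fun x => (GG z - GG x) + (1 - GG z)) := by
      funext x; ring
    rw [hfun, integral_add
      (intOn_of_bounded μF (f := fun x => GG z - GG x) (continuous_const.sub hGGcont) 1
        (fun x => by rw [abs_le]; constructor <;> nlinarith [hGG01 x, hGGle1 x, hGG01 z, hGGle1 z]) _)
      (integrableOn_const (measure_ne_top _ _)),
      setIntegral_const, measureReal_def, cdf_Ioc0 hFFmono hFF0 hμF z,
      ENNReal.toReal_ofReal (hFF01 z), smul_eq_mul]
  rw [hsplit, hJ, hI2, hS1S2]
  ring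
end


/-- for each 0 < ν ≤ 1, t^{1/ν}·C(U_F(t)) → ∞ as t → ∞, where C := F − G and U_F(t) := F^←(1−1/t). -/
theorem t_pow_mul_C_tendsto_atTop
    (FF GG : ℝ → ℝ) (γ₁ γ₂ : ℝ) (hγ₁ : 0 < γ₁) (hγ₂ : 0 < γ₂)
    (hFFmono : Monotone FF) (hFFcont : Continuous FF)
    (hFF0 : ∀ x ≤ (0 : ℝ), FF x = 0) (hFFtop : Tendsto FF atTop (nhds 1))
    (hGGmono : Monotone GG) (hGGcont : Continuous GG)
    (hGG0 : ∀ x ≤ (0 : ℝ), GG x = 0) (hGGtop : Tendsto GG atTop (nhds 1))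
    (hFFlt : ∀ z : ℝ, FF z < 1) (hGGlt : ∀ z : ℝ, GG z < 1)
    (hRVF : ∀ x > (0 : ℝ),
      Tendsto (fun z => (1 - FF (x * z)) / (1 - FF z)) atTop (nhds (x ^ (-(1 / γ₁)))))
    (hRVG : ∀ x > (0 : ℝ),
      Tendsto (fun z => (1 - GG (x * z)) / (1 - GG z)) atTop (nhds (x ^ (-(1 / γ₂)))))
    -- second-order condition for 𝐅
    (τ₁ : ℝ) (hτ₁ : τ₁ < 0) (AF : ℝ → ℝ) (hAF0 : Tendsto AF atTop (nhds 0))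
    (hAFsign : (∀ᶠ t in atTop, 0 < AF t) ∨ (∀ᶠ t in atTop, AF t < 0))
    (hAFrv : ∀ x > (0 : ℝ), Tendsto (fun t => |AF (x * t)| / |AF t|) atTop (nhds (x ^ τ₁)))
    (hSOF : ∀ x > (0 : ℝ),
      Tendsto (fun t => (tailQuantile FF (t * x) / tailQuantile FF t - x ^ γ₁) / AF t)
        atTop (nhds (x ^ γ₁ * ((x ^ τ₁ - 1) / τ₁))))
    -- second-order condition for 𝐆
    (τ₂ : ℝ) (hτ₂ : τ₂ < 0) (AG : ℝ → ℝ) (hAG0 : Tendsto AG atTop (nhds 0))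
    (hAGsign : (∀ᶠ t in atTop, 0 < AG t) ∨ (∀ᶠ t in atTop, AG t < 0))
    (hAGrv : ∀ x > (0 : ℝ), Tendsto (fun t => |AG (x * t)| / |AG t|) atTop (nhds (x ^ τ₂)))
    (hSOG : ∀ x > (0 : ℝ),
      Tendsto (fun t => (tailQuantile GG (t * x) / tailQuantile GG t - x ^ γ₂) / AG t)
        atTop (nhds (x ^ γ₂ * ((x ^ τ₂ - 1) / τ₂))))
    -- observed marginals
    (μF μG : Measure ℝ)
    (hμF : ∀ b, μF (Set.Iic b) = ENNReal.ofReal (FF b))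
    (hμG : ∀ b, μG (Set.Iic b) = ENNReal.ofReal (GG b))
    (p : ℝ) (hp : p = ∫ z in Set.Ioi (0 : ℝ), (1 - GG z) ∂μF) (hppos : 0 < p)
    (F G : ℝ → ℝ)
    (hF : ∀ x, F x = p⁻¹ * ∫ z in Set.Ioc (0 : ℝ) x, (1 - GG z) ∂μF)
    (hG : ∀ y, G y = p⁻¹ * ∫ z in Set.Ioc (0 : ℝ) y, FF z ∂μG)
    (γ : ℝ) (hγ : γ = γ₁ * γ₂ / (γ₁ + γ₂)) :
    ∀ ν : ℝ, 0 < ν → ν ≤ 1 →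
      Tendsto (fun t => t ^ (1 / ν) * (F (tailQuantile F t) - G (tailQuantile F t)))
        atTop atTop := by
  clear hRVF hRVG hSOF hSOG hAFrv hAGrv hAF0 hAG0 hAFsign hAGsign hτ₁ hτ₂ hγ₁ hγ₂ hγ
  haveI hFfin : IsFiniteMeasure μF := cdf_finite hFFtop hμF
  haveI hGfin : IsFiniteMeasure μG := cdf_finite hGGtop hμG
  have hFF01 : ∀ x, 0 ≤ FF x := cdf_nonneg hFFmono hFF0
  have hGG01 : ∀ x, 0 ≤ GG x := cdf_nonneg hGGmono hGG0
  have hGGle1 : ∀ x, GG x ≤ 1 := cdf_le_one hGGmono hGGtop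
  have hpinv : 0 < p⁻¹ := inv_pos.2 hppos
  -- integrability of 1 - GG on any set
  have hgint : ∀ s : Set ℝ, IntegrableOn (fun t => 1 - GG t) s μF := by
    intro s
    refine intOn_of_bounded μF (f := fun t => 1 - GG t) (continuous_const.sub hGGcont) 1 (fun x => ?_) s
    rw [abs_le]; constructor <;> nlinarith [hGG01 x, hGGle1 x]
  -- notation for the partial integral
  set I : ℝ → ℝ := fun x => ∫ t in Set.Ioc (0:ℝ) x, (1 - GG t) ∂μF with hIdef
  have hFI : ∀ x, F x = p⁻¹ * I x := hF
  -- basic increment estimates for I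
  have hIdiff : ∀ x x' : ℝ, x ≤ x' → I x ≤ I x' ∧ I x' - I x ≤ FF x' - FF x := by
    intro x x' h
    have hnn : (0:ℝ → ℝ) ≤ᶠ[ae (μF.restrict (Set.Ioc (0:ℝ) x'))] (fun t => 1 - GG t) :=
      ae_of_all _ (fun t => sub_nonneg.2 (hGGle1 t))
    have hmono : I x ≤ I x' :=
      setIntegral_mono_set (hgint _) hnn (Set.Ioc_subset_Ioc_right h).eventuallyLE
    refine ⟨hmono, ?_⟩
    have hconst_le : ∀ s : Set ℝ, MeasurableSet s →
        (∫ t in s, (1 - GG t) ∂μF) ≤ (μF s).toReal := by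
      intro s hs
      have := setIntegral_mono_on (hgint s)
        (integrableOn_const (measure_ne_top _ _)) hs
        (fun t _ => by nlinarith [hGG01 t] : ∀ t ∈ s, 1 - GG t ≤ 1)
      simpa [measureReal_def] using this
    rcases le_or_gt x 0 with hx0 | hx0
    · have hIx : I x = 0 := by
        rw [hIdef]
        simp [Set.Ioc_eq_empty (fun hc => absurd hx0 (not_le.2 hc))]
      have hIx' : I x' ≤ FF x' := by
        have := hconst_le (Set.Ioc 0 x') measurableSet_Ioc
        rwa [cdf_Ioc0 hFFmono hFF0 hμF, ENNReal.toReal_ofReal (hFF01 x')] at this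
      rw [hIx, hFF0 x hx0]
      linarith
    · have hun : Set.Ioc (0:ℝ) x ∪ Set.Ioc x x' = Set.Ioc (0:ℝ) x' :=
        Set.Ioc_union_Ioc_eq_Ioc hx0.le h
      have hsum : I x' = I x + ∫ t in Set.Ioc x x', (1 - GG t) ∂μF := by
        rw [hIdef]
        simp only [← hun]
        exact setIntegral_union (Set.Ioc_disjoint_Ioc_of_le le_rfl) measurableSet_Ioc
          (hgint _) (hgint _)
      have hpart : (∫ t in Set.Ioc x x', (1 - GG t) ∂μF) ≤ FF x' - FF x := by
        have := hconst_le (Set.Ioc x x') measurableSet_Ioc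
        rwa [cdf_Ioc hFFmono hFF0 hμF h, ENNReal.toReal_ofReal (by linarith [hFFmono h])] at this
      linarith
  have hImono : Monotone I := fun x x' h => (hIdiff x x' h).1
  have hFmono : Monotone F := by
    intro x x' h
    rw [hFI, hFI]
    exact mul_le_mul_of_nonneg_left (hImono h) hpinv.le
  have hF0 : ∀ x ≤ (0:ℝ), F x = 0 := by
    intro x hx
    rw [hFI, hIdef]
    simp [Set.Ioc_eq_empty (fun h => absurd hx (not_le.2 h))]
  have hFcont : Continuous F := by
    rw [continuous_iff_continuousAt]
    intro a
    rw [Metric.continuousAt_iff]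
    intro ε hε
    obtain ⟨δ, hδ, hδ'⟩ := Metric.continuousAt_iff.mp hFFcont.continuousAt (ε * p)
      (mul_pos hε hppos)
    refine ⟨δ, hδ, fun {y} hy => ?_⟩
    have hFFd : |FF y - FF a| < ε * p := by
      have := hδ' hy
      rwa [Real.dist_eq] at this
    have hkey : |F y - F a| ≤ p⁻¹ * |FF y - FF a| := by
      rcases le_or_gt y a with hya | hya
      · obtain ⟨h1, h2⟩ := hIdiff y a hya
        rw [hFI, hFI, ← mul_sub, abs_of_nonpos (by nlinarith : p⁻¹ * (I y - I a) ≤ 0),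
          abs_of_nonpos (by linarith [hFFmono hya] : FF y - FF a ≤ 0)]
        nlinarith
      · obtain ⟨h1, h2⟩ := hIdiff a y hya.le
        rw [hFI, hFI, ← mul_sub, abs_of_nonneg (by nlinarith : (0:ℝ) ≤ p⁻¹ * (I y - I a)),
          abs_of_nonneg (by linarith [hFFmono hya.le] : (0:ℝ) ≤ FF y - FF a)]
        nlinarith
    rw [Real.dist_eq]
    calc |F y - F a| ≤ p⁻¹ * |FF y - FF a| := hkey
    _ < p⁻¹ * (ε * p) := by
        apply mul_lt_mul_of_pos_left hFFd hpinv
    _ = ε := by field_simp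
  -- tail formula : for z > 0, p - I z = ∫ over Ioi z
  have htail : ∀ z : ℝ, 0 < z → p - I z = ∫ t in Set.Ioi z, (1 - GG t) ∂μF := by
    intro z hz
    have hun : Set.Ioc (0:ℝ) z ∪ Set.Ioi z = Set.Ioi (0:ℝ) := Set.Ioc_union_Ioi_eq_Ioi hz.le
    have : p = I z + ∫ t in Set.Ioi z, (1 - GG t) ∂μF := by
      rw [hp, ← hun]
      exact setIntegral_union (Set.Ioc_disjoint_Ioi le_rfl) measurableSet_Ioi
        (hgint _) (hgint _)
    linarith
  -- tail upper bound
  have htail_ub : ∀ z : ℝ, 0 < z → 1 - F z ≤ p⁻¹ * ((1 - GG z) * (1 - FF z)) := by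
    intro z hz
    have h1 : 1 - F z = p⁻¹ * (p - I z) := by
      rw [hFI, mul_sub, inv_mul_cancel₀ hppos.ne']
    have h2 : (∫ t in Set.Ioi z, (1 - GG t) ∂μF) ≤ (1 - GG z) * (1 - FF z) := by
      have hm := setIntegral_mono_on (hgint (Set.Ioi z))
        (integrableOn_const (measure_ne_top _ _)) measurableSet_Ioi
        (fun t ht => by linarith [hGGmono (le_of_lt ht)] : ∀ t ∈ Set.Ioi z, 1 - GG t ≤ 1 - GG z)
      rw [setIntegral_const, measureReal_def, cdf_Ioi hFFmono hFF0 hFFtop hμF, ENNReal.toReal_ofReal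
        (by linarith [hFFlt z] : (0:ℝ) ≤ 1 - FF z), smul_eq_mul] at hm
      linarith [hm]
    rw [h1, htail z hz]
    exact mul_le_mul_of_nonneg_left h2 hpinv.le
  -- F z < 1
  have hFlt : ∀ z : ℝ, F z < 1 := by
    intro z
    rcases le_or_gt z 0 with hz | hz
    · rw [hF0 z hz]; norm_num
    · obtain ⟨w, hw⟩ := (hFFtop.eventually (eventually_gt_nhds (hFFlt z))).exists
      have hzw : z < w := by
        by_contra hc
        exact absurd (hFFmono (not_lt.1 hc)) (not_le.2 hw)
      have hlb : (FF w - FF z) * (1 - GG w) ≤ ∫ t in Set.Ioi z, (1 - GG t) ∂μF := by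
        have hstep1 : (FF w - FF z) * (1 - GG w)
            ≤ ∫ t in Set.Ioc z w, (1 - GG t) ∂μF := by
          have hm := setIntegral_mono_on
            (integrableOn_const (measure_ne_top _ _))
            (hgint (Set.Ioc z w)) measurableSet_Ioc
            (fun t ht => by linarith [hGGmono ht.2] : ∀ t ∈ Set.Ioc z w, 1 - GG w ≤ 1 - GG t)
          rw [setIntegral_const, measureReal_def, cdf_Ioc hFFmono hFF0 hμF hzw.le, ENNReal.toReal_ofReal
            (by linarith : (0:ℝ) ≤ FF w - FF z), smul_eq_mul] at hm
          linarith [hm]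
        refine hstep1.trans (setIntegral_mono_set (hgint _)
          (ae_of_all _ (fun t => sub_nonneg.2 (hGGle1 t)))
          (Set.Ioc_subset_Ioi_self).eventuallyLE)
      have hpos : 0 < ∫ t in Set.Ioi z, (1 - GG t) ∂μF := by
        have : 0 < (FF w - FF z) * (1 - GG w) := by
          apply mul_pos (by linarith) (by linarith [hGGlt w])
        linarith
      have : 0 < 1 - F z := by
        have h1 : 1 - F z = p⁻¹ * (p - I z) := by
          rw [hFI, mul_sub, inv_mul_cancel₀ hppos.ne']
        rw [h1, htail z hz]
        exact mul_pos hpinv hpos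
      linarith
  -- F tends to 1 at infinity
  have hFtop : Tendsto F atTop (nhds 1) := by
    have hlo : Tendsto (fun z => 1 - p⁻¹ * ((1 - GG z) * (1 - FF z))) atTop (nhds 1) := by
      have h0 : Tendsto (fun z => p⁻¹ * ((1 - GG z) * (1 - FF z))) atTop (nhds 0) := by
        have hG0 : Tendsto (fun z => 1 - GG z) atTop (nhds 0) := by
          simpa using (tendsto_const_nhds (x := (1:ℝ))).sub hGGtop
        have hF0' : Tendsto (fun z => 1 - FF z) atTop (nhds 0) := by
          simpa using (tendsto_const_nhds (x := (1:ℝ))).sub hFFtop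
        simpa using tendsto_const_nhds.mul (hG0.mul hF0')
      simpa using tendsto_const_nhds.sub h0
    refine tendsto_of_tendsto_of_tendsto_of_le_of_le' hlo tendsto_const_nhds ?_ ?_
    · filter_upwards [eventually_gt_atTop (0:ℝ)] with z hz
      linarith [htail_ub z hz]
    · exact Eventually.of_forall (fun z => (hFlt z).le)
  -- key identity at the level of F and G
  have hC : ∀ z : ℝ, 0 < z → F z - G z = p⁻¹ * (FF z * (1 - GG z)) := by
    intro z hz
    rw [hF, hG, ← mul_sub,
      key_identity hFFmono hFFcont hFF0 hFFtop hGGmono hGGcont hGG0 hGGtop hμF hμG z hz.le]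
  -- the quantile function of F
  set Z : ℝ → ℝ := fun t => tailQuantile F t with hZdef
  have hZval : ∀ t : ℝ, 1 < t → F (Z t) = 1 - 1/t ∧ 0 < Z t := by
    intro t ht
    have ht0 : 0 < t := lt_trans one_pos ht
    have h1t : 0 < 1 - 1/t := by
      have : 1/t < 1 := by rw [div_lt_one ht0]; exact ht
      linarith
    have h1t' : 1 - 1/t < 1 := by
      have : 0 < 1/t := by positivity
      linarith
    set S : Set ℝ := {y | 1 - 1/t ≤ F y} with hSdef
    have hZS : Z t = sInf S := rfl
    have hSne : S.Nonempty := by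
      obtain ⟨y, hy⟩ := (hFtop.eventually (eventually_gt_nhds h1t')).exists
      exact ⟨y, hy.le⟩
    have hSbdd : BddBelow S := by
      refine ⟨0, fun y hy => ?_⟩
      by_contra hc
      rw [hSdef, mem_setOf_eq, hF0 y (le_of_not_ge hc)] at hy
      linarith
    have hSclosed : IsClosed S := by
      have : S = F ⁻¹' Set.Ici (1 - 1/t) := rfl
      rw [this]
      exact IsClosed.preimage hFcont isClosed_Ici
    have hmem : Z t ∈ S := by rw [hZS]; exact hSclosed.csInf_mem hSne hSbdd
    have hge : 1 - 1/t ≤ F (Z t) := hmem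
    have hZpos : 0 < Z t := by
      by_contra hc
      rw [hF0 (Z t) (le_of_not_gt hc)] at hge
      linarith
    refine ⟨le_antisymm ?_ hge, hZpos⟩
    by_contra hc
    push_neg at hc
    obtain ⟨δ, hδ, hδ'⟩ := Metric.continuousAt_iff.mp hFcont.continuousAt
      (F (Z t) - (1 - 1/t)) (by linarith)
    have hyS : Z t - δ/2 ∈ S := by
      have hd : dist (Z t - δ/2) (Z t) < δ := by
        rw [Real.dist_eq, abs_of_nonpos (by linarith)]; linarith
      have := abs_lt.mp ((Real.dist_eq _ _) ▸ hδ' hd)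
      rw [hSdef, mem_setOf_eq]
      linarith [this.1]
    have : Z t ≤ Z t - δ/2 := by rw [hZS]; exact csInf_le hSbdd hyS
    linarith
  have hZtop : Tendsto Z atTop atTop := by
    rw [tendsto_atTop]
    intro M
    have h1 : Tendsto (fun t : ℝ => 1/t) atTop (nhds 0) :=
      tendsto_const_nhds.div_atTop tendsto_id
    have hFM : F M < 1 := hFlt M
    have h2 : ∀ᶠ t : ℝ in atTop, 1/t < 1 - F M :=
      h1.eventually (eventually_lt_nhds (by linarith))
    filter_upwards [h2, eventually_gt_atTop (1:ℝ)] with t h2t ht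
    obtain ⟨hFZ, _⟩ := hZval t ht
    by_contra hc
    push_neg at hc
    have : F (Z t) ≤ F M := hFmono hc.le
    rw [hFZ] at this
    linarith
  -- final assembly
  intro ν hν hν1
  have h1ν : 1 ≤ 1/ν := by rw [le_div_iff₀ hν]; linarith
  have hLtop : Tendsto (fun t => FF (Z t) / (1 - FF (Z t))) atTop atTop := by
    have hq : Tendsto (fun x => FF x / (1 - FF x)) atTop atTop := by
      simp_rw [div_eq_mul_inv]
      refine Tendsto.pos_mul_atTop one_pos hFFtop ?_
      refine tendsto_inv_nhdsGT_zero.comp ?_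
      rw [tendsto_nhdsWithin_iff]
      constructor
      · simpa using (tendsto_const_nhds (x := (1:ℝ))).sub hFFtop
      · exact Eventually.of_forall (fun x => sub_pos.2 (hFFlt x))
    exact hq.comp hZtop
  refine tendsto_atTop_mono' atTop ?_ hLtop
  filter_upwards [eventually_gt_atTop (1:ℝ)] with t ht
  obtain ⟨hFZ, hZpos⟩ := hZval t ht
  have ht0 : (0:ℝ) < t := lt_trans one_pos ht
  set z := Z t with hzdef
  set a := FF z with hadef
  set b := 1 - GG z with hbdef
  set c := 1 - FF z with hcdef
  have ha0 : 0 ≤ a := hFF01 z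
  have hb0 : 0 < b := by rw [hbdef]; linarith [hGGlt z]
  have hc0 : 0 < c := by rw [hcdef]; linarith [hFFlt z]
  have hCz : F z - G z = p⁻¹ * (a * b) := hC z hZpos
  have hCnn : 0 ≤ F z - G z := by
    rw [hCz]; positivity
  have hub := htail_ub z hZpos
  have h1t : 1 - F z = 1/t := by rw [hFZ]; ring
  have hkey : 1 ≤ t * (p⁻¹ * (b * c)) := by
    have h2 : 1/t ≤ p⁻¹ * (b * c) := by rw [← h1t]; exact hub
    calc (1:ℝ) = t * (1/t) := by field_simp
    _ ≤ t * (p⁻¹ * (b * c)) := by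
        exact mul_le_mul_of_nonneg_left h2 ht0.le
  have hstep : a / c ≤ t * (F z - G z) := by
    rw [hCz, div_le_iff₀ hc0]
    nlinarith [mul_le_mul_of_nonneg_left hkey ha0]
  have hrpow : t ≤ t ^ (1/ν) := by
    calc t = t ^ (1:ℝ) := (Real.rpow_one t).symm
    _ ≤ t ^ (1/ν) := Real.rpow_le_rpow_of_exponent_le ht.le h1ν
  calc FF (Z t) / (1 - FF (Z t)) = a / c := rfl
  _ ≤ t * (F z - G z) := hstep
  _ ≤ t ^ (1/ν) * (F z - G z) := mul_le_mul_of_nonneg_right hrpow hCnn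
end

section
/- Under the truncation model with regularly varying tails 𝐅̄ and 𝐆̄ of indices −1/γ₁ and −1/γ₂, the survival functions F̄ := 1−F and Ḡ := 1−G of the observed marginals are regularly varying at infinity with indices −1/γ and −1/γ₂ respectively, where γ := γ₁γ₂/(γ₁+γ₂): for every x > 0, F̄(xz)/F̄(z) → x^{−1/γ} and Ḡ(xz)/Ḡ(z) → x^{−1/γ₂} as z → ∞. -/
open MeasureTheory Filter Set Real

lemma Phi_nonneg {Φ : ℝ → ℝ} (hmono : Monotone Φ) (h0 : ∀ x ≤ (0:ℝ), Φ x = 0) (x : ℝ) :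
    0 ≤ Φ x := by
  rcases le_or_gt x 0 with h | h
  · rw [h0 x h]
  · rw [← h0 0 le_rfl]; exact hmono h.le

lemma meas_univ {Φ : ℝ → ℝ} {μ : Measure ℝ}
    (hμ : ∀ b, μ (Iic b) = ENNReal.ofReal (Φ b))
    (htop : Tendsto Φ atTop (nhds 1)) : μ univ = 1 := by
  have h1 : Tendsto (fun n : ℕ => μ (Iic (n:ℝ))) atTop (nhds (μ (⋃ n : ℕ, Iic (n:ℝ)))) :=
    tendsto_measure_iUnion_atTop (fun m n hmn => Iic_subset_Iic.2 (by exact_mod_cast hmn))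
  have hU : (⋃ n : ℕ, Iic (n:ℝ)) = univ := by
    ext x; simp only [mem_iUnion, mem_Iic, mem_univ, iff_true]
    exact exists_nat_ge x
  rw [hU] at h1
  have h2 : Tendsto (fun n : ℕ => μ (Iic (n:ℝ))) atTop (nhds 1) := by
    have : Tendsto (fun n : ℕ => ENNReal.ofReal (Φ (n:ℝ))) atTop (nhds (ENNReal.ofReal 1)) :=
      (ENNReal.continuous_ofReal.tendsto 1).comp (htop.comp tendsto_natCast_atTop_atTop)
    simpa [hμ] using this
  exact tendsto_nhds_unique h1 h2

lemma meas_Ioi {Φ : ℝ → ℝ} {μ : Measure ℝ}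
    (hμ : ∀ b, μ (Iic b) = ENNReal.ofReal (Φ b))
    (hmono : Monotone Φ) (h0 : ∀ x ≤ (0:ℝ), Φ x = 0)
    (htop : Tendsto Φ atTop (nhds 1)) (b : ℝ) :
    μ (Ioi b) = ENNReal.ofReal (1 - Φ b) := by
  have h1 : μ (Ioi b) = μ univ - μ (Iic b) := by
    rw [← Set.compl_Iic]
    exact measure_compl measurableSet_Iic (by rw [hμ]; exact ENNReal.ofReal_ne_top)
  rw [h1, meas_univ hμ htop, hμ, ← ENNReal.ofReal_one,
    ← ENNReal.ofReal_sub _ (Phi_nonneg hmono h0 b)]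

lemma meas_Ioc {Φ : ℝ → ℝ} {μ : Measure ℝ}
    (hμ : ∀ b, μ (Iic b) = ENNReal.ofReal (Φ b))
    (hmono : Monotone Φ) (h0 : ∀ x ≤ (0:ℝ), Φ x = 0)
    {s t : ℝ} (hst : s ≤ t) : μ (Ioc s t) = ENNReal.ofReal (Φ t - Φ s) := by
  have h1 : μ (Ioc s t) = μ (Iic t) - μ (Iic s) := by
    rw [← Iic_sdiff_Iic]
    exact measure_diff (Iic_subset_Iic.2 hst) measurableSet_Iic.nullMeasurableSet
      (by rw [hμ]; exact ENNReal.ofReal_ne_top)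
  rw [h1, hμ, hμ, ← ENNReal.ofReal_sub _ (Phi_nonneg hmono h0 s)]

lemma ennreal_eq_zero_of_forall (a : ENNReal) (key : ∀ ε > (0:ℝ), a ≤ ENNReal.ofReal ε) : a = 0 := by
  refine le_antisymm ?_ zero_le
  refine ENNReal.le_of_forall_pos_le_add fun ε hε _ => ?_
  rw [zero_add]
  calc a ≤ ENNReal.ofReal ε := key ε (by exact_mod_cast hε)
    _ = (ε : ENNReal) := ENNReal.ofReal_coe_nnreal
lemma meas_singleton {Φ : ℝ → ℝ} {μ : Measure ℝ}
    (hμ : ∀ b, μ (Iic b) = ENNReal.ofReal (Φ b))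
    (hmono : Monotone Φ) (h0 : ∀ x ≤ (0:ℝ), Φ x = 0)
    (hcont : Continuous Φ) (x : ℝ) : μ {x} = 0 := by
  have key : ∀ ε > (0:ℝ), μ {x} ≤ ENNReal.ofReal ε := by
    intro ε hε
    have hc : Tendsto Φ (nhds x) (nhds (Φ x)) := hcont.tendsto x
    have h1 : ∀ᶠ y in nhds x, Φ x - ε < Φ y :=
      hc.eventually (eventually_gt_nhds (show Φ x - ε < Φ x by linarith))
    have h2 : ∀ᶠ y in nhdsWithin x (Iio x), Φ x - ε < Φ y := h1.filter_mono nhdsWithin_le_nhds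
    obtain ⟨y, hy1, hy2⟩ := (h2.and self_mem_nhdsWithin).exists
    have hsub : {x} ⊆ Ioc y x := by intro z hz; rw [mem_singleton_iff] at hz; subst hz; exact ⟨hy2, le_rfl⟩
    calc μ {x} ≤ μ (Ioc y x) := measure_mono hsub
      _ = ENNReal.ofReal (Φ x - Φ y) := by
          rw [← Iic_sdiff_Iic]
          rw [measure_diff (Iic_subset_Iic.2 hy2.le) measurableSet_Iic.nullMeasurableSet
            (by rw [hμ]; exact ENNReal.ofReal_ne_top), hμ, hμ,
            ← ENNReal.ofReal_sub]
          rcases le_or_gt y 0 with h | h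
          · rw [h0 y h]
          · rw [← h0 0 le_rfl]; exact hmono h.le
      _ ≤ ENNReal.ofReal ε := ENNReal.ofReal_le_ofReal (by linarith)
  exact ennreal_eq_zero_of_forall _ key

lemma p_eq {FF GG : ℝ → ℝ} {μF μG : Measure ℝ}
    (hFFmono : Monotone FF) (hFFcont : Continuous FF)
    (hFF0 : ∀ x ≤ (0 : ℝ), FF x = 0) (hFFtop : Tendsto FF atTop (nhds 1))
    (hGGmono : Monotone GG) (hGGcont : Continuous GG)
    (hGG0 : ∀ x ≤ (0 : ℝ), GG x = 0) (hGGtop : Tendsto GG atTop (nhds 1))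
    (hGGpos : ∀ z, GG z < 1)
    (hμF : ∀ b, μF (Set.Iic b) = ENNReal.ofReal (FF b))
    (hμG : ∀ b, μG (Set.Iic b) = ENNReal.ofReal (GG b)) :
    ∫ z in Ioi (0:ℝ), (1 - GG z) ∂μF = ∫ z in Ioi (0:ℝ), FF z ∂μG := by
  haveI : IsProbabilityMeasure μF := ⟨meas_univ hμF hFFtop⟩
  haveI : IsProbabilityMeasure μG := ⟨meas_univ hμG hGGtop⟩
  set s : Set (ℝ × ℝ) := {q | 0 < q.1 ∧ q.1 < q.2} with hs_def
  set t : Set (ℝ × ℝ) := {q | 0 < q.2 ∧ q.1 ≤ q.2} with ht_def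
  have hs : MeasurableSet s :=
    (measurableSet_lt measurable_const measurable_fst).inter
      (measurableSet_lt measurable_fst measurable_snd)
  have ht : MeasurableSet t :=
    (measurableSet_lt measurable_const measurable_snd).inter
      (measurableSet_le measurable_fst measurable_snd)
  have h1 : ∫ z in Ioi (0:ℝ), (1 - GG z) ∂μF
      = (∫⁻ z in Ioi (0:ℝ), ENNReal.ofReal (1 - GG z) ∂μF).toReal := by
    rw [integral_eq_lintegral_of_nonneg_ae (f := fun z => 1 - GG z)
      (ae_of_all _ (fun z => by simp; linarith [hGGpos z]))
      ((continuous_const.sub hGGcont).aestronglyMeasurable)]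
  have h2 : ∫ z in Ioi (0:ℝ), FF z ∂μG
      = (∫⁻ z in Ioi (0:ℝ), ENNReal.ofReal (FF z) ∂μG).toReal := by
    rw [integral_eq_lintegral_of_nonneg_ae
      (ae_of_all _ (fun z => by simpa using Phi_nonneg hFFmono hFF0 z))
      (hFFcont.aestronglyMeasurable)]
  have h3 : ∫⁻ z in Ioi (0:ℝ), ENNReal.ofReal (1 - GG z) ∂μF = (μF.prod μG) s := by
    rw [Measure.prod_apply hs]
    rw [← lintegral_indicator measurableSet_Ioi]
    refine lintegral_congr fun x => ?_
    rcases lt_or_ge 0 x with h | h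
    · have : Prod.mk x ⁻¹' s = Ioi x := by
        ext y; simp [hs_def, h]
      rw [this, Set.indicator_of_mem (show x ∈ Ioi (0:ℝ) from h), meas_Ioi hμG hGGmono hGG0 hGGtop]
    · have : Prod.mk x ⁻¹' s = ∅ := by
        ext y; simp [hs_def, not_lt.2 h]
      rw [this, indicator_of_notMem (by simpa using h)]
      simp
  have h4 : ∫⁻ z in Ioi (0:ℝ), ENNReal.ofReal (FF z) ∂μG = (μF.prod μG) t := by
    rw [Measure.prod_apply_symm ht]
    rw [← lintegral_indicator measurableSet_Ioi]
    refine lintegral_congr fun y => ?_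
    rcases lt_or_ge 0 y with h | h
    · have : (fun x => (x, y)) ⁻¹' t = Iic y := by
        ext x; simp [ht_def, h]
      rw [this, Set.indicator_of_mem (show y ∈ Ioi (0:ℝ) from h), hμF]
    · have : (fun x => (x, y)) ⁻¹' t = ∅ := by
        ext x; simp [ht_def, not_lt.2 h]
      rw [this, indicator_of_notMem (by simpa using h)]
      simp
  have hst : (μF.prod μG) s = (μF.prod μG) t := by
    refine le_antisymm (measure_mono fun q hq => ⟨lt_trans hq.1 hq.2, hq.2.le⟩) ?_
    have hts : t ⊆ s ∪ ((Iic (0:ℝ) ×ˢ univ) ∪ {q : ℝ × ℝ | q.1 = q.2}) := by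
      rintro ⟨x, y⟩ ⟨hy, hxy⟩
      rcases lt_or_ge 0 x with hx | hx
      · rcases lt_or_eq_of_le hxy with h | h
        · exact Or.inl ⟨hx, h⟩
        · exact Or.inr (Or.inr h)
      · exact Or.inr (Or.inl ⟨hx, mem_univ _⟩)
    have hz1 : (μF.prod μG) (Iic (0:ℝ) ×ˢ univ) = 0 := by
      rw [Measure.prod_prod, hμF]
      simp [hFF0 0 le_rfl]
    have hz2 : (μF.prod μG) {q : ℝ × ℝ | q.1 = q.2} = 0 := by
      rw [Measure.prod_apply (measurableSet_eq_fun measurable_fst measurable_snd)]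
      have hx : ∀ x : ℝ, μG ({x} : Set ℝ) = 0 := meas_singleton hμG hGGmono hGG0 hGGcont
      have hpre : ∀ x : ℝ, Prod.mk x ⁻¹' {q : ℝ × ℝ | q.1 = q.2} = ({x} : Set ℝ) := by
        intro x; ext y; simp [eq_comm]
      simp [hpre, hx]
    calc (μF.prod μG) t ≤ (μF.prod μG) s + (μF.prod μG) ((Iic (0:ℝ) ×ˢ univ) ∪ {q : ℝ × ℝ | q.1 = q.2}) :=
          le_trans (measure_mono hts) (measure_union_le _ _)
      _ ≤ (μF.prod μG) s + ((μF.prod μG) (Iic (0:ℝ) ×ˢ univ) + (μF.prod μG) {q : ℝ × ℝ | q.1 = q.2}) :=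
          add_le_add le_rfl (measure_union_le _ _)
      _ = (μF.prod μG) s := by rw [hz1, hz2]; simp
  rw [h1, h2, h3, h4, hst]

section Bounds
variable {FF GG : ℝ → ℝ} {μF : Measure ℝ}

lemma integrable_g (hGGmono : Monotone GG) (hGGcont : Continuous GG)
    (hGG0 : ∀ x ≤ (0:ℝ), GG x = 0) (hGGpos : ∀ z, GG z < 1)
    [IsFiniteMeasure μF] (S : Set ℝ) :
    IntegrableOn (fun z => 1 - GG z) S μF := by
  refine Integrable.mono' (integrable_const 1)
    ((continuous_const.sub hGGcont).aestronglyMeasurable) (ae_of_all _ fun z => ?_)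
  have h1 : 0 ≤ GG z := Phi_nonneg hGGmono hGG0 z
  rw [Real.norm_eq_abs, abs_of_nonneg (by linarith [hGGpos z])]
  linarith

lemma setint_Ioc_bounds (hμF : ∀ b, μF (Iic b) = ENNReal.ofReal (FF b))
    (hFFmono : Monotone FF) (hFF0 : ∀ x ≤ (0:ℝ), FF x = 0)
    (hGGmono : Monotone GG) (hGGcont : Continuous GG)
    (hGG0 : ∀ x ≤ (0:ℝ), GG x = 0) (hGGpos : ∀ z, GG z < 1)
    [IsFiniteMeasure μF] {s t : ℝ} (hst : s ≤ t) :
    (1 - GG t) * (FF t - FF s) ≤ ∫ z in Ioc s t, (1 - GG z) ∂μF ∧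
    ∫ z in Ioc s t, (1 - GG z) ∂μF ≤ (1 - GG s) * (FF t - FF s) := by
  have hmeas : (μF (Ioc s t)).toReal = FF t - FF s := by
    rw [meas_Ioc hμF hFFmono hFF0 hst, ENNReal.toReal_ofReal (by linarith [hFFmono hst])]
  have hint := integrable_g (μF := μF) hGGmono hGGcont hGG0 hGGpos (Ioc s t)
  constructor
  · have : ∫ z in Ioc s t, (1 - GG t) ∂μF ≤ ∫ z in Ioc s t, (1 - GG z) ∂μF := by
      refine setIntegral_mono_on (integrableOn_const (measure_lt_top _ _).ne) hint
        measurableSet_Ioc (fun z hz => ?_)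
      have := hGGmono hz.2; linarith
    rwa [setIntegral_const, measureReal_def, hmeas, smul_eq_mul, mul_comm] at this
  · have : ∫ z in Ioc s t, (1 - GG z) ∂μF ≤ ∫ z in Ioc s t, (1 - GG s) ∂μF := by
      refine setIntegral_mono_on hint (integrableOn_const (measure_lt_top _ _).ne)
        measurableSet_Ioc (fun z hz => ?_)
      have := hGGmono hz.1.le; linarith
    rwa [setIntegral_const, measureReal_def, hmeas, smul_eq_mul, mul_comm] at this

lemma setint_Ioi_le (hμF : ∀ b, μF (Iic b) = ENNReal.ofReal (FF b))
    (hFFmono : Monotone FF) (hFF0 : ∀ x ≤ (0:ℝ), FF x = 0)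
    (hFFtop : Tendsto FF atTop (nhds 1)) (hFFlt1 : ∀ z, FF z < 1)
    (hGGmono : Monotone GG) (hGGcont : Continuous GG)
    (hGG0 : ∀ x ≤ (0:ℝ), GG x = 0) (hGGpos : ∀ z, GG z < 1)
    [IsFiniteMeasure μF] (s : ℝ) :
    ∫ z in Ioi s, (1 - GG z) ∂μF ≤ (1 - GG s) * (1 - FF s) := by
  have hmeas : (μF (Ioi s)).toReal = 1 - FF s := by
    rw [meas_Ioi hμF hFFmono hFF0 hFFtop, ENNReal.toReal_ofReal (by linarith [hFFlt1 s])]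
  have hint := integrable_g (μF := μF) hGGmono hGGcont hGG0 hGGpos (Ioi s)
  have : ∫ z in Ioi s, (1 - GG z) ∂μF ≤ ∫ z in Ioi s, (1 - GG s) ∂μF := by
    refine setIntegral_mono_on hint (integrableOn_const (measure_lt_top _ _).ne)
      measurableSet_Ioi (fun z hz => ?_)
    have := hGGmono (le_of_lt hz); linarith
  rwa [setIntegral_const, measureReal_def, hmeas, smul_eq_mul, mul_comm] at this

lemma setint_split (hGGmono : Monotone GG) (hGGcont : Continuous GG)
    (hGG0 : ∀ x ≤ (0:ℝ), GG x = 0) (hGGpos : ∀ z, GG z < 1)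
    [IsFiniteMeasure μF] {u v : ℝ} (huv : u ≤ v) :
    ∫ z in Ioi u, (1 - GG z) ∂μF
      = (∫ z in Ioc u v, (1 - GG z) ∂μF) + ∫ z in Ioi v, (1 - GG z) ∂μF := by
  rw [← Ioc_union_Ioi_eq_Ioi huv]
  exact setIntegral_union (Ioc_disjoint_Ioi le_rfl) measurableSet_Ioi
    (integrable_g hGGmono hGGcont hGG0 hGGpos _) (integrable_g hGGmono hGGcont hGG0 hGGpos _)

lemma setint_Ioi_pos (hμF : ∀ b, μF (Iic b) = ENNReal.ofReal (FF b))
    (hFFmono : Monotone FF) (hFF0 : ∀ x ≤ (0:ℝ), FF x = 0)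
    (hFFtop : Tendsto FF atTop (nhds 1)) (hFFlt1 : ∀ z, FF z < 1)
    (hGGmono : Monotone GG) (hGGcont : Continuous GG)
    (hGG0 : ∀ x ≤ (0:ℝ), GG x = 0) (hGGpos : ∀ z, GG z < 1)
    [IsFiniteMeasure μF] (s : ℝ) :
    0 < ∫ z in Ioi s, (1 - GG z) ∂μF := by
  obtain ⟨t, ht⟩ := (hFFtop.eventually (eventually_gt_nhds (hFFlt1 s))).exists
  have hts : s ≤ t := by
    by_contra h
    exact absurd (hFFmono (le_of_not_ge h)) (not_le.2 ht)
  have h1 := (setint_Ioc_bounds hμF hFFmono hFF0 hGGmono hGGcont hGG0 hGGpos hts).1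
  have h2 : 0 ≤ ∫ z in Ioi t, (1 - GG z) ∂μF :=
    setIntegral_nonneg measurableSet_Ioi (fun z _ => by linarith [hGGpos z])
  rw [setint_split hGGmono hGGcont hGG0 hGGpos hts]
  nlinarith [hGGpos t]

end Bounds
section GSide
variable {FF GG : ℝ → ℝ} {μG : Measure ℝ}

lemma integrable_f (hFFmono : Monotone FF) (hFFcont : Continuous FF)
    (hFF0 : ∀ x ≤ (0:ℝ), FF x = 0) (hFFlt1 : ∀ z, FF z < 1)
    [IsFiniteMeasure μG] (S : Set ℝ) :
    IntegrableOn (fun z => FF z) S μG := by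
  refine Integrable.mono' (integrable_const 1) hFFcont.aestronglyMeasurable
    (ae_of_all _ fun z => ?_)
  rw [Real.norm_eq_abs, abs_of_nonneg (Phi_nonneg hFFmono hFF0 z)]
  exact (hFFlt1 z).le

lemma setintF_split (hFFmono : Monotone FF) (hFFcont : Continuous FF)
    (hFF0 : ∀ x ≤ (0:ℝ), FF x = 0) (hFFlt1 : ∀ z, FF z < 1)
    [IsFiniteMeasure μG] {u v : ℝ} (huv : u ≤ v) :
    ∫ z in Ioi u, FF z ∂μG
      = (∫ z in Ioc u v, FF z ∂μG) + ∫ z in Ioi v, FF z ∂μG := by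
  rw [← Ioc_union_Ioi_eq_Ioi huv]
  exact setIntegral_union (Ioc_disjoint_Ioi le_rfl) measurableSet_Ioi
    (integrable_f hFFmono hFFcont hFF0 hFFlt1 _) (integrable_f hFFmono hFFcont hFF0 hFFlt1 _)

lemma setintF_Ioi_bounds (hμG : ∀ b, μG (Iic b) = ENNReal.ofReal (GG b))
    (hGGmono : Monotone GG) (hGG0 : ∀ x ≤ (0:ℝ), GG x = 0)
    (hGGtop : Tendsto GG atTop (nhds 1)) (hGGlt1 : ∀ z, GG z < 1)
    (hFFmono : Monotone FF) (hFFcont : Continuous FF)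
    (hFF0 : ∀ x ≤ (0:ℝ), FF x = 0) (hFFlt1 : ∀ z, FF z < 1)
    [IsFiniteMeasure μG] (s : ℝ) :
    FF s * (1 - GG s) ≤ ∫ z in Ioi s, FF z ∂μG ∧
      ∫ z in Ioi s, FF z ∂μG ≤ 1 - GG s := by
  have hmeas : (μG (Ioi s)).toReal = 1 - GG s := by
    rw [meas_Ioi hμG hGGmono hGG0 hGGtop, ENNReal.toReal_ofReal (by linarith [hGGlt1 s])]
  have hint := integrable_f (μG := μG) hFFmono hFFcont hFF0 hFFlt1 (Ioi s)
  constructor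
  · have : ∫ z in Ioi s, FF s ∂μG ≤ ∫ z in Ioi s, FF z ∂μG :=
      setIntegral_mono_on (integrableOn_const (measure_lt_top _ _).ne) hint
        measurableSet_Ioi (fun z hz => hFFmono hz.le)
    rwa [setIntegral_const, measureReal_def, hmeas, smul_eq_mul, mul_comm] at this
  · have : ∫ z in Ioi s, FF z ∂μG ≤ ∫ z in Ioi s, (1:ℝ) ∂μG :=
      setIntegral_mono_on hint (integrableOn_const (measure_lt_top _ _).ne)
        measurableSet_Ioi (fun z _ => (hFFlt1 z).le)
    rwa [setIntegral_const, measureReal_def, hmeas, smul_eq_mul, mul_one] at this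

lemma setintF_Ioc_lb (hμG : ∀ b, μG (Iic b) = ENNReal.ofReal (GG b))
    (hGGmono : Monotone GG) (hGG0 : ∀ x ≤ (0:ℝ), GG x = 0)
    (hFFmono : Monotone FF) (hFFcont : Continuous FF)
    (hFF0 : ∀ x ≤ (0:ℝ), FF x = 0) (hFFlt1 : ∀ z, FF z < 1)
    [IsFiniteMeasure μG] {u t : ℝ} (hut : u ≤ t) :
    FF u * (GG t - GG u) ≤ ∫ z in Ioc u t, FF z ∂μG := by
  have hmeas : (μG (Ioc u t)).toReal = GG t - GG u := by
    rw [meas_Ioc hμG hGGmono hGG0 hut, ENNReal.toReal_ofReal (by linarith [hGGmono hut])]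
  have : ∫ z in Ioc u t, FF u ∂μG ≤ ∫ z in Ioc u t, FF z ∂μG :=
    setIntegral_mono_on (integrableOn_const (measure_lt_top _ _).ne)
      (integrable_f hFFmono hFFcont hFF0 hFFlt1 _)
      measurableSet_Ioc (fun z hz => hFFmono hz.1.le)
  rwa [setIntegral_const, measureReal_def, hmeas, smul_eq_mul, mul_comm] at this

lemma setintF_Ioi_pos (hμG : ∀ b, μG (Iic b) = ENNReal.ofReal (GG b))
    (hGGmono : Monotone GG) (hGG0 : ∀ x ≤ (0:ℝ), GG x = 0)
    (hGGtop : Tendsto GG atTop (nhds 1)) (hGGlt1 : ∀ z, GG z < 1)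
    (hFFmono : Monotone FF) (hFFcont : Continuous FF)
    (hFF0 : ∀ x ≤ (0:ℝ), FF x = 0) (hFFlt1 : ∀ z, FF z < 1)
    (hFFtop : Tendsto FF atTop (nhds 1))
    [IsFiniteMeasure μG] (s : ℝ) :
    0 < ∫ z in Ioi s, FF z ∂μG := by
  obtain ⟨t0, ht0⟩ := (hFFtop.eventually (eventually_gt_nhds (show (1:ℝ)/2 < 1 by norm_num))).exists
  set u := max s t0 with hu
  have hFFu : (1:ℝ)/2 < FF u := lt_of_lt_of_le ht0 (hFFmono (le_max_right _ _))
  obtain ⟨t, ht⟩ := (hGGtop.eventually (eventually_gt_nhds (hGGlt1 u))).exists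
  have hut : u ≤ t := by
    by_contra h
    exact absurd (hGGmono (le_of_not_ge h)) (not_le.2 ht)
  have h1 := setintF_Ioc_lb hμG hGGmono hGG0 hFFmono hFFcont hFF0 hFFlt1 hut
  have h2 : 0 ≤ ∫ z in Ioi t, FF z ∂μG :=
    setIntegral_nonneg measurableSet_Ioi (fun z _ => Phi_nonneg hFFmono hFF0 z)
  have h3 : 0 ≤ ∫ z in Ioc s u, FF z ∂μG :=
    setIntegral_nonneg measurableSet_Ioc (fun z _ => Phi_nonneg hFFmono hFF0 z)
  rw [setintF_split hFFmono hFFcont hFF0 hFFlt1 (le_max_left s t0),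
    setintF_split hFFmono hFFcont hFF0 hFFlt1 hut]
  nlinarith

end GSide


lemma slope_rpow {a : ℝ} (ha : 0 < a) :
    Tendsto (fun r : ℝ => (1 - r ^ (-a)) / (r - 1)) (nhdsWithin 1 (Ioi 1)) (nhds a) := by
  have h1 : HasDerivAt (fun x : ℝ => x ^ (-a)) (-a * (1:ℝ) ^ (-a - 1)) 1 :=
    Real.hasDerivAt_rpow_const (Or.inl one_ne_zero)
  have h2 : HasDerivAt (fun x : ℝ => 1 - x ^ (-a)) a 1 := by
    have := (hasDerivAt_const (1:ℝ) (1:ℝ)).sub h1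
    simpa [Real.one_rpow, Pi.sub_def] using this
  have h3 := hasDerivAt_iff_tendsto_slope.mp h2
  have h4 : Tendsto (slope (fun x : ℝ => 1 - x ^ (-a)) 1) (nhdsWithin 1 (Ioi 1)) (nhds a) :=
    h3.mono_left (nhdsWithin_mono 1 (fun x hx => ne_of_gt hx))
  refine h4.congr' ?_
  filter_upwards [self_mem_nhdsWithin] with r hr
  rw [slope_def_field]
  simp [Real.one_rpow]

lemma Ulim {a u : ℝ} (ha : 0 < a) (hu : 0 < u) :
    Tendsto (fun r : ℝ => (1 - r ^ (-a)) / (1 - r ^ (-u))) (nhdsWithin 1 (Ioi 1))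
      (nhds (a / u)) := by
  have h1 := slope_rpow ha
  have h2 := slope_rpow hu
  have h3 := h1.div h2 (ne_of_gt hu)
  refine h3.congr' ?_
  filter_upwards [self_mem_nhdsWithin] with r hr
  have hr1 : r - 1 ≠ 0 := sub_ne_zero.2 (ne_of_gt hr)
  simp only [Pi.div_apply]
  field_simp

lemma pow_rpow_comm {r : ℝ} (hr : 0 < r) (c : ℝ) (k : ℕ) :
    ((r ^ k : ℝ)) ^ c = (r ^ c) ^ k := by
  rw [← Real.rpow_natCast r k, ← Real.rpow_mul hr.le, mul_comm, Real.rpow_mul hr.le,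
    Real.rpow_natCast]

section Grid
variable {FF GG : ℝ → ℝ} {μF : Measure ℝ}

lemma setint_split_n (hGGmono : Monotone GG) (hGGcont : Continuous GG)
    (hGG0 : ∀ x ≤ (0:ℝ), GG x = 0) (hGGpos : ∀ z, GG z < 1)
    [IsFiniteMeasure μF] {r z : ℝ} (hr : 1 ≤ r) (hz : 0 ≤ z) (n : ℕ) :
    ∫ w in Ioi z, (1 - GG w) ∂μF
      = (∑ k ∈ Finset.range n, ∫ w in Ioc (r ^ k * z) (r ^ (k + 1) * z), (1 - GG w) ∂μF)
        + ∫ w in Ioi (r ^ n * z), (1 - GG w) ∂μF := by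
  induction n with
  | zero => simp
  | succ n ih =>
    rw [ih, Finset.sum_range_succ]
    have h1 : r ^ n * z ≤ r ^ (n + 1) * z :=
      mul_le_mul_of_nonneg_right (pow_le_pow_right₀ hr (Nat.le_succ n)) hz
    rw [setint_split hGGmono hGGcont hGG0 hGGpos h1]
    ring

set_option maxHeartbeats 1000000 in
lemma Hratio_tendsto (a b : ℝ) (ha : 0 < a) (hb : 0 < b)
    (hμF : ∀ s, μF (Iic s) = ENNReal.ofReal (FF s))
    (hFFmono : Monotone FF) (hFFcont : Continuous FF)
    (hFF0 : ∀ x ≤ (0:ℝ), FF x = 0) (hFFtop : Tendsto FF atTop (nhds 1))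
    (hFFlt1 : ∀ z, FF z < 1)
    (hGGmono : Monotone GG) (hGGcont : Continuous GG)
    (hGG0 : ∀ x ≤ (0:ℝ), GG x = 0) (hGGlt1 : ∀ z, GG z < 1)
    (hRVF : ∀ x > (0:ℝ),
      Tendsto (fun z => (1 - FF (x * z)) / (1 - FF z)) atTop (nhds (x ^ (-a))))
    (hRVG : ∀ x > (0:ℝ),
      Tendsto (fun z => (1 - GG (x * z)) / (1 - GG z)) atTop (nhds (x ^ (-b))))
    [IsFiniteMeasure μF] :
    Tendsto (fun z => (∫ w in Ioi z, (1 - GG w) ∂μF) / ((1 - FF z) * (1 - GG z)))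
      atTop (nhds (a / (a + b))) := by
  obtain ⟨c, hc_def⟩ : ∃ c : ℝ, c = a / (a + b) := ⟨_, rfl⟩
  rw [← hc_def]
  have hab : 0 < a + b := by linarith
  have hc_pos : 0 < c := hc_def ▸ div_pos ha hab
  rw [Metric.tendsto_nhds]
  intro ε hε
  -- Step 1: choose r > 1
  have hU : Tendsto (fun r : ℝ => (1 - r ^ (-a)) / (1 - r ^ (-(a + b))))
      (nhdsWithin 1 (Ioi 1)) (nhds c) := by
    rw [hc_def]
    exact Ulim ha hab
  have hpowb : Tendsto (fun r : ℝ => r ^ (-b)) (nhdsWithin 1 (Ioi 1)) (nhds 1) := by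
    have h1 : ContinuousAt (fun r : ℝ => r ^ (-b)) 1 :=
      Real.continuousAt_rpow_const 1 (-b) (Or.inl one_ne_zero)
    have := h1.tendsto.mono_left (nhdsWithin_le_nhds (s := Ioi (1:ℝ)))
    simpa [Real.one_rpow] using this
  have hL : Tendsto (fun r : ℝ => r ^ (-b) * ((1 - r ^ (-a)) / (1 - r ^ (-(a + b)))))
      (nhdsWithin 1 (Ioi 1)) (nhds c) := by
    have := hpowb.mul hU
    simpa using this
  have hev : ∀ᶠ r in nhdsWithin (1:ℝ) (Ioi 1),
      ((1 - r ^ (-a)) / (1 - r ^ (-(a + b))) < c + ε / 2 ∧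
        c - ε / 2 < r ^ (-b) * ((1 - r ^ (-a)) / (1 - r ^ (-(a + b)))) ∧ 1 < r) := by
    filter_upwards [hU.eventually (eventually_lt_nhds (by linarith : c < c + ε / 2)),
      hL.eventually (eventually_gt_nhds (by linarith : c - ε / 2 < c)),
      self_mem_nhdsWithin] with r h1 h2 h3
    exact ⟨h1, h2, h3⟩
  obtain ⟨r, hr1, hr2, hr⟩ := hev.exists
  have hr0 : 0 < r := by linarith
  set ρ : ℝ := r ^ (-(a + b)) with hρ_def
  have hρ_pos : 0 < ρ := Real.rpow_pos_of_pos hr0 _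
  have hρ_lt1 : ρ < 1 := Real.rpow_lt_one_of_one_lt_of_neg hr (by linarith)
  have hra_lt1 : r ^ (-a) < 1 := Real.rpow_lt_one_of_one_lt_of_neg hr (by linarith)
  have hra_pos : 0 < r ^ (-a) := Real.rpow_pos_of_pos hr0 _
  have hrb_le1 : r ^ (-b) ≤ 1 := Real.rpow_le_one_of_one_le_of_nonpos hr.le (by linarith)
  have hrb_pos : 0 < r ^ (-b) := Real.rpow_pos_of_pos hr0 _
  have hρ_le : ρ ≤ r ^ (-a) := Real.rpow_le_rpow_of_exponent_le hr.le (by linarith)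
  set U : ℝ := (1 - r ^ (-a)) / (1 - r ^ (-(a + b))) with hU_def
  have hU_nonneg : 0 ≤ U := div_nonneg (by linarith) (by rw [← hρ_def]; linarith)
  have hU_le1 : U ≤ 1 := by
    rw [hU_def]
    rw [div_le_one (by rw [← hρ_def]; linarith)]
    rw [← hρ_def]; linarith
  -- Step 2: choose n
  have hn_ex : ∃ n : ℕ, ρ ^ n < ε / 2 := by
    have := tendsto_pow_atTop_nhds_zero_of_lt_one hρ_pos.le hρ_lt1
    exact (this.eventually (eventually_lt_nhds (by linarith : (0:ℝ) < ε / 2))).exists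
  obtain ⟨n, hn⟩ := hn_ex
  have hρn_pos : 0 < ρ ^ n := pow_pos hρ_pos n
  -- geometric sum
  set s : ℝ := ∑ k ∈ Finset.range n, ρ ^ k with hs_def
  have hs_val : (1 - r ^ (-a)) * s = U * (1 - ρ ^ n) := by
    have h1 : ρ - 1 ≠ 0 := by linarith
    have h2 : (1:ℝ) - ρ ≠ 0 := by linarith
    rw [hs_def, geom_sum_eq (ne_of_lt hρ_lt1), hU_def, ← hρ_def]
    field_simp
    ring
  -- the limits
  have hBlim_lt : (1 - r ^ (-a)) * s + ρ ^ n < c + ε := by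
    have : U * (1 - ρ ^ n) ≤ U := by nlinarith
    nlinarith
  have hAlim_gt : c - ε < r ^ (-b) * ((1 - r ^ (-a)) * s) := by
    have hbU : r ^ (-b) * U ≤ 1 := by nlinarith
    have key : r ^ (-b) * U * ρ ^ n ≤ ρ ^ n := by nlinarith
    have heq : r ^ (-b) * ((1 - r ^ (-a)) * s) = r ^ (-b) * U - r ^ (-b) * U * ρ ^ n := by
      rw [hs_val]; ring
    linarith
  -- identity for powers
  have hpow_id : ∀ k : ℕ, ((r ^ k : ℝ)) ^ (-b) * ((r ^ k : ℝ)) ^ (-a) = ρ ^ k := by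
    intro k
    rw [pow_rpow_comm hr0, pow_rpow_comm hr0, ← mul_pow, hρ_def,
      ← Real.rpow_add hr0]
    ring_nf
  have hterm_id : ∀ k : ℕ,
      ((r ^ (k+1) : ℝ)) ^ (-b) * (((r ^ k : ℝ)) ^ (-a) - ((r ^ (k+1) : ℝ)) ^ (-a))
        = r ^ (-b) * ((1 - r ^ (-a)) * ρ ^ k) := by
    intro k
    rw [pow_rpow_comm hr0, pow_rpow_comm hr0, pow_rpow_comm hr0]
    have : ρ ^ k = (r ^ (-b)) ^ k * (r ^ (-a)) ^ k := by
      rw [← mul_pow, hρ_def, ← Real.rpow_add hr0]; ring_nf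
    rw [this, pow_succ, pow_succ]
    ring
  have hterm_id' : ∀ k : ℕ,
      ((r ^ k : ℝ)) ^ (-b) * (((r ^ k : ℝ)) ^ (-a) - ((r ^ (k+1) : ℝ)) ^ (-a))
        = (1 - r ^ (-a)) * ρ ^ k := by
    intro k
    rw [pow_rpow_comm hr0, pow_rpow_comm hr0, pow_rpow_comm hr0]
    have : ρ ^ k = (r ^ (-b)) ^ k * (r ^ (-a)) ^ k := by
      rw [← mul_pow, hρ_def, ← Real.rpow_add hr0]; ring_nf
    rw [this, pow_succ]
    ring
  -- ratio functions
  set Ar : ℝ → ℝ := fun z => ∑ k ∈ Finset.range n,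
    ((1 - GG (r ^ (k+1) * z)) / (1 - GG z)) *
      ((1 - FF (r ^ k * z)) / (1 - FF z) - (1 - FF (r ^ (k+1) * z)) / (1 - FF z)) with hAr_def
  set Br : ℝ → ℝ := fun z => (∑ k ∈ Finset.range n,
    ((1 - GG (r ^ k * z)) / (1 - GG z)) *
      ((1 - FF (r ^ k * z)) / (1 - FF z) - (1 - FF (r ^ (k+1) * z)) / (1 - FF z)))
    + ((1 - GG (r ^ n * z)) / (1 - GG z)) * ((1 - FF (r ^ n * z)) / (1 - FF z)) with hBr_def
  have hAr_tendsto : Tendsto Ar atTop (nhds (r ^ (-b) * ((1 - r ^ (-a)) * s))) := by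
    have hsum : Tendsto Ar atTop (nhds (∑ k ∈ Finset.range n,
        r ^ (-b) * ((1 - r ^ (-a)) * ρ ^ k))) := by
      refine tendsto_finset_sum _ (fun k _ => ?_)
      have hk : (0:ℝ) < r ^ k := pow_pos hr0 k
      have hk1 : (0:ℝ) < r ^ (k+1) := pow_pos hr0 (k+1)
      have := (hRVG _ hk1).mul ((hRVF _ hk).sub (hRVF _ hk1))
      rwa [hterm_id k] at this
    rwa [← Finset.mul_sum, ← Finset.mul_sum] at hsum
  have hBr_tendsto : Tendsto Br atTop (nhds ((1 - r ^ (-a)) * s + ρ ^ n)) := by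
    have hsum : Tendsto (fun z => ∑ k ∈ Finset.range n,
        ((1 - GG (r ^ k * z)) / (1 - GG z)) *
          ((1 - FF (r ^ k * z)) / (1 - FF z) - (1 - FF (r ^ (k+1) * z)) / (1 - FF z)))
        atTop (nhds (∑ k ∈ Finset.range n, (1 - r ^ (-a)) * ρ ^ k)) := by
      refine tendsto_finset_sum _ (fun k _ => ?_)
      have hk : (0:ℝ) < r ^ k := pow_pos hr0 k
      have hk1 : (0:ℝ) < r ^ (k+1) := pow_pos hr0 (k+1)
      have := (hRVG _ hk).mul ((hRVF _ hk).sub (hRVF _ hk1))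
      rwa [hterm_id' k] at this
    have htail : Tendsto (fun z =>
        ((1 - GG (r ^ n * z)) / (1 - GG z)) * ((1 - FF (r ^ n * z)) / (1 - FF z)))
        atTop (nhds (ρ ^ n)) := by
      have hk : (0:ℝ) < r ^ n := pow_pos hr0 n
      have := (hRVG _ hk).mul (hRVF _ hk)
      rwa [hpow_id n] at this
    have := hsum.add htail
    rwa [← Finset.mul_sum] at this
  -- pointwise bounds
  have hbound : ∀ z > (0:ℝ),
      Ar z ≤ (∫ w in Ioi z, (1 - GG w) ∂μF) / ((1 - FF z) * (1 - GG z)) ∧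
      (∫ w in Ioi z, (1 - GG w) ∂μF) / ((1 - FF z) * (1 - GG z)) ≤ Br z := by
    intro z hz
    have hfz : 0 < 1 - FF z := by linarith [hFFlt1 z]
    have hgz : 0 < 1 - GG z := by linarith [hGGlt1 z]
    have hfg : 0 < (1 - FF z) * (1 - GG z) := mul_pos hfz hgz
    have hsplit := setint_split_n hGGmono hGGcont hGG0 hGGlt1 (μF := μF) hr.le hz.le n
    -- A z ≤ H z
    have hA_le : Ar z * ((1 - FF z) * (1 - GG z)) ≤ ∫ w in Ioi z, (1 - GG w) ∂μF := by
      rw [hsplit]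
      have hterm : ∀ k ∈ Finset.range n,
          ((1 - GG (r ^ (k+1) * z)) / (1 - GG z)) *
            ((1 - FF (r ^ k * z)) / (1 - FF z) - (1 - FF (r ^ (k+1) * z)) / (1 - FF z))
            * ((1 - FF z) * (1 - GG z))
          ≤ ∫ w in Ioc (r ^ k * z) (r ^ (k+1) * z), (1 - GG w) ∂μF := by
        intro k _
        have hle : r ^ k * z ≤ r ^ (k+1) * z :=
          mul_le_mul_of_nonneg_right (pow_le_pow_right₀ hr.le (Nat.le_succ k)) hz.le
        have h1 := (setint_Ioc_bounds hμF hFFmono hFF0 hGGmono hGGcont hGG0 hGGlt1 hle).1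
        have heq : ((1 - GG (r ^ (k+1) * z)) / (1 - GG z)) *
            ((1 - FF (r ^ k * z)) / (1 - FF z) - (1 - FF (r ^ (k+1) * z)) / (1 - FF z))
            * ((1 - FF z) * (1 - GG z))
            = (1 - GG (r ^ (k+1) * z)) * (FF (r ^ (k+1) * z) - FF (r ^ k * z)) := by
          field_simp [hfz.ne', hgz.ne']
          try ring
          try (left; trivial)
        rw [heq]
        exact h1
      have htail_nonneg : 0 ≤ ∫ w in Ioi (r ^ n * z), (1 - GG w) ∂μF :=
        setIntegral_nonneg measurableSet_Ioi (fun w _ => by linarith [hGGlt1 w])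
      calc Ar z * ((1 - FF z) * (1 - GG z))
          = ∑ k ∈ Finset.range n,
            ((1 - GG (r ^ (k+1) * z)) / (1 - GG z)) *
              ((1 - FF (r ^ k * z)) / (1 - FF z) - (1 - FF (r ^ (k+1) * z)) / (1 - FF z))
              * ((1 - FF z) * (1 - GG z)) := by
            rw [hAr_def, Finset.sum_mul]
        _ ≤ ∑ k ∈ Finset.range n, ∫ w in Ioc (r ^ k * z) (r ^ (k+1) * z), (1 - GG w) ∂μF :=
            Finset.sum_le_sum hterm
        _ ≤ _ := by linarith
    -- H z ≤ B z
    have hB_ge : (∫ w in Ioi z, (1 - GG w) ∂μF) ≤ Br z * ((1 - FF z) * (1 - GG z)) := by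
      rw [hsplit]
      have hterm : ∀ k ∈ Finset.range n,
          ∫ w in Ioc (r ^ k * z) (r ^ (k+1) * z), (1 - GG w) ∂μF
          ≤ ((1 - GG (r ^ k * z)) / (1 - GG z)) *
            ((1 - FF (r ^ k * z)) / (1 - FF z) - (1 - FF (r ^ (k+1) * z)) / (1 - FF z))
            * ((1 - FF z) * (1 - GG z)) := by
        intro k _
        have hle : r ^ k * z ≤ r ^ (k+1) * z :=
          mul_le_mul_of_nonneg_right (pow_le_pow_right₀ hr.le (Nat.le_succ k)) hz.le
        have h1 := (setint_Ioc_bounds hμF hFFmono hFF0 hGGmono hGGcont hGG0 hGGlt1 hle).2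
        have heq : ((1 - GG (r ^ k * z)) / (1 - GG z)) *
            ((1 - FF (r ^ k * z)) / (1 - FF z) - (1 - FF (r ^ (k+1) * z)) / (1 - FF z))
            * ((1 - FF z) * (1 - GG z))
            = (1 - GG (r ^ k * z)) * (FF (r ^ (k+1) * z) - FF (r ^ k * z)) := by
          field_simp [hfz.ne', hgz.ne']
          try ring
          try (left; trivial)
        rw [heq]
        exact h1
      have htail := setint_Ioi_le hμF hFFmono hFF0 hFFtop hFFlt1 hGGmono hGGcont hGG0 hGGlt1
        (μF := μF) (r ^ n * z)
      have htail' : ∫ w in Ioi (r ^ n * z), (1 - GG w) ∂μF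
          ≤ ((1 - GG (r ^ n * z)) / (1 - GG z)) * ((1 - FF (r ^ n * z)) / (1 - FF z))
            * ((1 - FF z) * (1 - GG z)) := by
        have heq : ((1 - GG (r ^ n * z)) / (1 - GG z)) * ((1 - FF (r ^ n * z)) / (1 - FF z))
            * ((1 - FF z) * (1 - GG z)) = (1 - GG (r ^ n * z)) * (1 - FF (r ^ n * z)) := by
          field_simp [hfz.ne', hgz.ne']
          try ring
          try (left; trivial)
        rw [heq]
        exact htail
      calc ∑ k ∈ Finset.range n, (∫ w in Ioc (r ^ k * z) (r ^ (k+1) * z), (1 - GG w) ∂μF)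
            + ∫ w in Ioi (r ^ n * z), (1 - GG w) ∂μF
          ≤ (∑ k ∈ Finset.range n,
            ((1 - GG (r ^ k * z)) / (1 - GG z)) *
              ((1 - FF (r ^ k * z)) / (1 - FF z) - (1 - FF (r ^ (k+1) * z)) / (1 - FF z))
              * ((1 - FF z) * (1 - GG z)))
            + ((1 - GG (r ^ n * z)) / (1 - GG z)) * ((1 - FF (r ^ n * z)) / (1 - FF z))
              * ((1 - FF z) * (1 - GG z)) :=
            add_le_add (Finset.sum_le_sum hterm) htail'
        _ = Br z * ((1 - FF z) * (1 - GG z)) := by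
            rw [hBr_def, add_mul, Finset.sum_mul]
      done
    constructor
    · rw [le_div_iff₀ hfg]
      exact hA_le
    · rw [div_le_iff₀ hfg]
      exact hB_ge
  -- combine
  filter_upwards [eventually_gt_atTop (0:ℝ),
    hAr_tendsto.eventually (eventually_gt_nhds hAlim_gt),
    hBr_tendsto.eventually (eventually_lt_nhds hBlim_lt)] with z hz hA hB
  obtain ⟨h1, h2⟩ := hbound z hz
  rw [Real.dist_eq, abs_lt]
  have hlow := lt_of_lt_of_le hA h1
  have hhigh := lt_of_le_of_lt h2 hB
  exact ⟨by linarith, by linarith⟩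

end Grid

/-- Under the truncation model with regularly varying tails 𝐅̄ and 𝐆̄ of
indices −1/γ₁ and −1/γ₂, the survival functions F̄ := 1−F and Ḡ := 1−G of the observed
marginals are regularly varying at infinity with indices −1/γ and −1/γ₂ respectively,
where γ := γ₁γ₂/(γ₁+γ₂). -/
theorem observed_tails_regularly_varying
    (FF GG : ℝ → ℝ) (γ₁ γ₂ : ℝ) (hγ₁ : 0 < γ₁) (hγ₂ : 0 < γ₂)
    (hFFmono : Monotone FF) (hFFcont : Continuous FF)
    (hFF0 : ∀ x ≤ (0 : ℝ), FF x = 0) (hFFtop : Tendsto FF atTop (nhds 1))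
    (hGGmono : Monotone GG) (hGGcont : Continuous GG)
    (hGG0 : ∀ x ≤ (0 : ℝ), GG x = 0) (hGGtop : Tendsto GG atTop (nhds 1))
    (hFFpos : ∀ z : ℝ, FF z < 1) (hGGpos : ∀ z : ℝ, GG z < 1)
    (hRVF : ∀ x > (0 : ℝ),
      Tendsto (fun z => (1 - FF (x * z)) / (1 - FF z)) atTop (nhds (x ^ (-(1 / γ₁)))))
    (hRVG : ∀ x > (0 : ℝ),
      Tendsto (fun z => (1 - GG (x * z)) / (1 - GG z)) atTop (nhds (x ^ (-(1 / γ₂)))))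
    (μF μG : Measure ℝ)
    (hμF : ∀ b, μF (Set.Iic b) = ENNReal.ofReal (FF b))
    (hμG : ∀ b, μG (Set.Iic b) = ENNReal.ofReal (GG b))
    (p : ℝ) (hp : p = ∫ z in Set.Ioi (0 : ℝ), (1 - GG z) ∂μF) (hppos : 0 < p)
    (F G : ℝ → ℝ)
    (hF : ∀ x, F x = p⁻¹ * ∫ z in Set.Ioc (0 : ℝ) x, (1 - GG z) ∂μF)
    (hG : ∀ y, G y = p⁻¹ * ∫ z in Set.Ioc (0 : ℝ) y, FF z ∂μG)
    (γ : ℝ) (hγ : γ = γ₁ * γ₂ / (γ₁ + γ₂)) :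
    (∀ x > (0 : ℝ),
      Tendsto (fun z => (1 - F (x * z)) / (1 - F z)) atTop (nhds (x ^ (-(1 / γ))))) ∧
    (∀ x > (0 : ℝ),
      Tendsto (fun z => (1 - G (x * z)) / (1 - G z)) atTop (nhds (x ^ (-(1 / γ₂))))) := by
  haveI : IsProbabilityMeasure μF := ⟨meas_univ hμF hFFtop⟩
  haveI : IsProbabilityMeasure μG := ⟨meas_univ hμG hGGtop⟩
  have ha : 0 < 1 / γ₁ := by positivity
  have hb : 0 < 1 / γ₂ := by positivity
  have hpne : p ≠ 0 := hppos.ne'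
  -- tail formula for F
  have tailF : ∀ y : ℝ, 0 ≤ y → 1 - F y = p⁻¹ * ∫ w in Ioi y, (1 - GG w) ∂μF := by
    intro y hy
    have hsplit := setint_split hGGmono hGGcont hGG0 hGGpos (μF := μF) hy
    have key : ∫ w in Ioc (0:ℝ) y, (1 - GG w) ∂μF = p - ∫ w in Ioi y, (1 - GG w) ∂μF := by
      rw [hp, hsplit]; ring
    rw [hF y, key]
    field_simp
    ring
  -- tail formula for G
  have hq : p = ∫ z in Ioi (0:ℝ), FF z ∂μG := by
    rw [hp]
    exact p_eq hFFmono hFFcont hFF0 hFFtop hGGmono hGGcont hGG0 hGGtop hGGpos hμF hμG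
  have tailG : ∀ y : ℝ, 0 ≤ y → 1 - G y = p⁻¹ * ∫ w in Ioi y, FF w ∂μG := by
    intro y hy
    have hsplit := setintF_split hFFmono hFFcont hFF0 hFFpos (μG := μG) hy
    have key : ∫ w in Ioc (0:ℝ) y, FF w ∂μG = p - ∫ w in Ioi y, FF w ∂μG := by
      rw [hq, hsplit]; ring
    rw [hG y, key]
    field_simp
    ring
  constructor
  · -- F part
    intro x hx
    have hc_pos : 0 < (1/γ₁) / (1/γ₁ + 1/γ₂) := by positivity
    have hc_ne : (1/γ₁) / (1/γ₁ + 1/γ₂) ≠ 0 := hc_pos.ne'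
    have hHr := Hratio_tendsto (1/γ₁) (1/γ₂) ha hb hμF hFFmono hFFcont hFF0 hFFtop hFFpos
      hGGmono hGGcont hGG0 hGGpos hRVF hRVG
    have hxz : Tendsto (fun z : ℝ => x * z) atTop atTop :=
      Tendsto.const_mul_atTop hx tendsto_id
    have T1 : Tendsto (fun z => (∫ w in Ioi (x * z), (1 - GG w) ∂μF)
        / ((1 - FF (x * z)) * (1 - GG (x * z)))) atTop
        (nhds ((1/γ₁) / (1/γ₁ + 1/γ₂))) := hHr.comp hxz
    have T3 : Tendsto (fun z => ((∫ w in Ioi z, (1 - GG w) ∂μF)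
        / ((1 - FF z) * (1 - GG z)))⁻¹) atTop
        (nhds ((1/γ₁) / (1/γ₁ + 1/γ₂))⁻¹) := hHr.inv₀ hc_ne
    have combined := (T1.mul ((hRVF x hx).mul (hRVG x hx))).mul T3
    have hval : x ^ (-(1/γ)) = (1/γ₁) / (1/γ₁ + 1/γ₂)
        * (x ^ (-(1/γ₁)) * x ^ (-(1/γ₂))) * ((1/γ₁) / (1/γ₁ + 1/γ₂))⁻¹ := by
      rw [← Real.rpow_add hx]
      have hexp : -(1/γ₁) + -(1/γ₂) = -(1/γ) := by
        rw [hγ]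
        field_simp
        ring
      rw [hexp, mul_comm ((1/γ₁) / (1/γ₁ + 1/γ₂)) _, mul_assoc,
        mul_inv_cancel₀ hc_ne, mul_one]
    rw [hval]
    refine combined.congr' ?_
    filter_upwards [eventually_gt_atTop (0:ℝ)] with z hz
    have hxz0 : 0 < x * z := mul_pos hx hz
    have hHz : 0 < ∫ w in Ioi z, (1 - GG w) ∂μF :=
      setint_Ioi_pos hμF hFFmono hFF0 hFFtop hFFpos hGGmono hGGcont hGG0 hGGpos z
    have hHxz : 0 < ∫ w in Ioi (x * z), (1 - GG w) ∂μF :=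
      setint_Ioi_pos hμF hFFmono hFF0 hFFtop hFFpos hGGmono hGGcont hGG0 hGGpos (x * z)
    have hfz : (0:ℝ) < 1 - FF z := by linarith [hFFpos z]
    have hgz : (0:ℝ) < 1 - GG z := by linarith [hGGpos z]
    have hfxz : (0:ℝ) < 1 - FF (x * z) := by linarith [hFFpos (x * z)]
    have hgxz : (0:ℝ) < 1 - GG (x * z) := by linarith [hGGpos (x * z)]
    show (∫ w in Ioi (x * z), (1 - GG w) ∂μF) / ((1 - FF (x * z)) * (1 - GG (x * z)))
        * ((1 - FF (x * z)) / (1 - FF z) * ((1 - GG (x * z)) / (1 - GG z)))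
        * ((∫ w in Ioi z, (1 - GG w) ∂μF) / ((1 - FF z) * (1 - GG z)))⁻¹
      = (1 - F (x * z)) / (1 - F z)
    rw [tailF (x * z) hxz0.le, tailF z hz.le,
      mul_div_mul_left _ _ (inv_ne_zero hpne)]
    field_simp
  · -- G part
    intro x hx
    have hxzt : Tendsto (fun z : ℝ => x * z) atTop atTop :=
      Tendsto.const_mul_atTop hx tendsto_id
    have hlow : Tendsto (fun z => FF (x * z) * ((1 - GG (x * z)) / (1 - GG z)))
        atTop (nhds (x ^ (-(1/γ₂)))) := by
      have := (hFFtop.comp hxzt).mul (hRVG x hx)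
      simpa using this
    have hup : Tendsto (fun z => ((1 - GG (x * z)) / (1 - GG z)) / FF z)
        atTop (nhds (x ^ (-(1/γ₂)))) := by
      have := (hRVG x hx).div hFFtop one_ne_zero
      simpa [Pi.div_def] using this
    refine tendsto_of_tendsto_of_tendsto_of_le_of_le' hlow hup ?_ ?_
    · filter_upwards [eventually_gt_atTop (0:ℝ),
        hFFtop.eventually (eventually_gt_nhds (show (1:ℝ)/2 < 1 by norm_num))] with z hz hFz
      have hxz0 : 0 < x * z := mul_pos hx hz
      have hgz : (0:ℝ) < 1 - GG z := by linarith [hGGpos z]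
      have hgxz : (0:ℝ) < 1 - GG (x * z) := by linarith [hGGpos (x * z)]
      have hIz_pos : 0 < ∫ w in Ioi z, FF w ∂μG :=
        setintF_Ioi_pos hμG hGGmono hGG0 hGGtop hGGpos hFFmono hFFcont hFF0 hFFpos hFFtop z
      have hb1 := setintF_Ioi_bounds hμG hGGmono hGG0 hGGtop hGGpos hFFmono hFFcont hFF0
        hFFpos (x * z)
      have hb2 := setintF_Ioi_bounds hμG hGGmono hGG0 hGGtop hGGpos hFFmono hFFcont hFF0
        hFFpos z
      have hratio : (1 - G (x * z)) / (1 - G z)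
          = (∫ w in Ioi (x * z), FF w ∂μG) / (∫ w in Ioi z, FF w ∂μG) := by
        rw [tailG (x * z) hxz0.le, tailG z hz.le, mul_div_mul_left _ _ (inv_ne_zero hpne)]
      rw [hratio]
      have h1 : FF (x * z) * ((1 - GG (x * z)) / (1 - GG z))
          = (FF (x * z) * (1 - GG (x * z))) / (1 - GG z) := by ring
      rw [h1]
      have hgxz : (0:ℝ) < 1 - GG (x * z) := by linarith [hGGpos (x * z)]
      have hnum_nonneg : 0 ≤ ∫ w in Ioi (x * z), FF w ∂μG :=
        le_trans (mul_nonneg (Phi_nonneg hFFmono hFF0 (x*z)) hgxz.le) hb1.1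
      exact div_le_div₀ hnum_nonneg hb1.1 hIz_pos hb2.2
    · filter_upwards [eventually_gt_atTop (0:ℝ),
        hFFtop.eventually (eventually_gt_nhds (show (1:ℝ)/2 < 1 by norm_num))] with z hz hFz
      have hxz0 : 0 < x * z := mul_pos hx hz
      have hgz : (0:ℝ) < 1 - GG z := by linarith [hGGpos z]
      have hgxz : (0:ℝ) < 1 - GG (x * z) := by linarith [hGGpos (x * z)]
      have hFz_pos : (0:ℝ) < FF z := by linarith
      have hb1 := setintF_Ioi_bounds hμG hGGmono hGG0 hGGtop hGGpos hFFmono hFFcont hFF0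
        hFFpos (x * z)
      have hb2 := setintF_Ioi_bounds hμG hGGmono hGG0 hGGtop hGGpos hFFmono hFFcont hFF0
        hFFpos z
      have hratio : (1 - G (x * z)) / (1 - G z)
          = (∫ w in Ioi (x * z), FF w ∂μG) / (∫ w in Ioi z, FF w ∂μG) := by
        rw [tailG (x * z) hxz0.le, tailG z hz.le, mul_div_mul_left _ _ (inv_ne_zero hpne)]
      rw [hratio]
      have h2 : ((1 - GG (x * z)) / (1 - GG z)) / FF z
          = (1 - GG (x * z)) / (FF z * (1 - GG z)) := by
        rw [div_div]; ring_nf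
      rw [h2]
      exact div_le_div₀ hgxz.le hb1.2 (mul_pos hFz_pos hgz) hb2.1
end

section
/- If 𝐅 is a continuous distribution function on [0,∞) whose survival function 𝐅̄ := 1−𝐅 is positive and regularly varying at infinity with index −1/γ₁ for some γ₁ > 0, then lim_{t→∞} (1/𝐅̄(t)) ∫_{(t,∞)} log(x/t) dμ_𝐅(x) = γ₁, where μ_𝐅 is the Lebesgue–Stieltjes measure of 𝐅. -/
open MeasureTheory Filter Set Real

/-- If `𝐅` is a continuous distribution function on `[0,∞)` whose survival
function `𝐅̄ := 1 − 𝐅` is positive and regularly varying at infinity with index `−1/γ₁`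
(`γ₁ > 0`), then `(1/𝐅̄(t)) ∫_{(t,∞)} log(x/t) dμ_𝐅(x) → γ₁` as `t → ∞`. -/
theorem mean_excess_log_limit
    (FF : ℝ → ℝ) (γ₁ : ℝ) (hγ₁ : 0 < γ₁)
    (hFFmono : Monotone FF) (hFFcont : Continuous FF)
    (hFF0 : ∀ x ≤ (0 : ℝ), FF x = 0) (hFFtop : Tendsto FF atTop (nhds 1))
    (hFFlt : ∀ z : ℝ, FF z < 1)
    (hRVF : ∀ x > (0 : ℝ),
      Tendsto (fun z => (1 - FF (x * z)) / (1 - FF z)) atTop (nhds (x ^ (-(1 / γ₁)))))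
    (μF : Measure ℝ) (hμF : ∀ b, μF (Set.Iic b) = ENNReal.ofReal (FF b)) :
    Tendsto (fun t => (1 - FF t)⁻¹ * ∫ x in Set.Ioi t, Real.log (x / t) ∂μF)
      atTop (nhds γ₁) := by
  -- basic positivity facts
  have hFF00 : FF 0 = 0 := hFF0 0 le_rfl
  have hFFnn : ∀ z, 0 ≤ FF z := by
    intro z
    rcases le_or_gt z 0 with h | h
    · exact (hFF0 z h).ge
    · rw [← hFF00]; exact hFFmono h.le
  have hpos : ∀ z, 0 < 1 - FF z := fun z => sub_pos.mpr (hFFlt z)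
  -- μF is a probability measure
  have hμuniv : μF Set.univ = 1 := by
    have h1 : Tendsto (fun b : ℝ => μF (Set.Iic b)) atTop (nhds (μF Set.univ)) :=
      tendsto_measure_Iic_atTop μF
    have h2 : Tendsto (fun b : ℝ => μF (Set.Iic b)) atTop (nhds 1) := by
      simp only [hμF]
      have h3 := (ENNReal.continuous_ofReal.tendsto 1).comp hFFtop
      simpa [Function.comp_def] using h3
    exact tendsto_nhds_unique h1 h2
  haveI : IsFiniteMeasure μF := ⟨by rw [hμuniv]; exact ENNReal.one_lt_top⟩
  have hIoi : ∀ y, μF (Set.Ioi y) = ENNReal.ofReal (1 - FF y) := by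
    intro y
    have hcompl := measure_compl (measurableSet_Iic (a := y)) (measure_ne_top μF _)
    rw [compl_Iic] at hcompl
    rw [hcompl, hμuniv, hμF, ENNReal.ofReal_sub 1 (hFFnn y), ENNReal.ofReal_one]
  -- key identity : for t > 0
  have hident : ∀ t : ℝ, 0 < t →
      ∫ x in Set.Ioi t, Real.log (x / t) ∂μF
        = ∫ s in Set.Ioi 0, (1 - FF (t * Real.exp s)) := by
    intro t ht
    have meas_log : Measurable fun x : ℝ => Real.log (x / t) :=
      Real.measurable_log.comp (measurable_id.div_const t)
    have nonneg : 0 ≤ᵐ[μF.restrict (Set.Ioi t)] fun x => Real.log (x / t) := by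
      apply ae_restrict_of_forall_mem measurableSet_Ioi
      intro x hx
      exact Real.log_nonneg ((one_le_div ht).mpr (le_of_lt hx))
    have hA : ∫⁻ x in Set.Ioi t, ENNReal.ofReal (Real.log (x / t)) ∂μF
        = ∫⁻ s in Set.Ioi 0, ENNReal.ofReal (1 - FF (t * Real.exp s)) := by
      rw [lintegral_eq_lintegral_meas_lt (μF.restrict (Set.Ioi t)) nonneg
        meas_log.aemeasurable]
      apply setLIntegral_congr_fun measurableSet_Ioi
      intro s hs
      dsimp only
      rw [Measure.restrict_apply (measurableSet_lt measurable_const meas_log)]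
      have hset : {x : ℝ | s < Real.log (x / t)} ∩ Set.Ioi t
          = Set.Ioi (t * Real.exp s) := by
        ext x
        simp only [mem_inter_iff, mem_setOf_eq, mem_Ioi]
        constructor
        · rintro ⟨hsx, hxt⟩
          have hx0 : 0 < x / t := div_pos (ht.trans hxt) ht
          have : Real.exp s < x / t := by
            calc Real.exp s < Real.exp (Real.log (x / t)) := Real.exp_lt_exp.mpr hsx
            _ = x / t := Real.exp_log hx0
          calc t * Real.exp s < t * (x / t) := by
                exact mul_lt_mul_of_pos_left this ht
          _ = x := by field_simp
        · intro hx
          have h1 : 1 < Real.exp s := by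
            have := Real.exp_lt_exp.mpr hs
            simpa using this
          have htx : t < x := by nlinarith [Real.exp_pos s]
          refine ⟨?_, htx⟩
          have hlt : Real.exp s < x / t := (lt_div_iff₀ ht).mpr (by linarith [hx])
          calc s = Real.log (Real.exp s) := (Real.log_exp s).symm
          _ < Real.log (x / t) := Real.log_lt_log (Real.exp_pos s) hlt
      rw [hset, hIoi]
    have e1 : ∫ x in Set.Ioi t, Real.log (x / t) ∂μF
        = (∫⁻ x in Set.Ioi t, ENNReal.ofReal (Real.log (x / t)) ∂μF).toReal :=
      integral_eq_lintegral_of_nonneg_ae nonneg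
        meas_log.aestronglyMeasurable.restrict
    have e2 : ∫ s in Set.Ioi 0, (1 - FF (t * Real.exp s))
        = (∫⁻ s in Set.Ioi 0, ENNReal.ofReal (1 - FF (t * Real.exp s))).toReal :=
      integral_eq_lintegral_of_nonneg_ae
        (ae_of_all _ fun s => (hpos _).le)
        ((continuous_const.sub
          (hFFcont.comp (continuous_const.mul Real.continuous_exp))).aestronglyMeasurable).restrict
    rw [e1, e2, hA]
  -- Potter-type bound via iteration
  set c : ℝ := Real.exp (-(1 / (2 * γ₁))) with hc
  have hc0 : 0 < c := Real.exp_pos _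
  have hkey : ∀ᶠ z in atTop, (1 - FF (Real.exp 1 * z)) / (1 - FF z) < c := by
    have hlim := hRVF (Real.exp 1) (Real.exp_pos 1)
    rw [Real.exp_one_rpow] at hlim
    have hlt : Real.exp (-(1 / γ₁)) < c := by
      apply Real.exp_lt_exp.mpr
      rw [neg_lt_neg_iff]
      apply one_div_lt_one_div_of_lt hγ₁
      linarith
    exact hlim.eventually_lt_const hlt
  obtain ⟨T₀, hT₀⟩ := eventually_atTop.mp hkey
  set T : ℝ := max T₀ 1 with hTdef
  have hT1 : (1:ℝ) ≤ T := le_max_right _ _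
  have hstep : ∀ z, T ≤ z → 1 - FF (Real.exp 1 * z) ≤ c * (1 - FF z) := by
    intro z hz
    have h0 := hT₀ z (le_trans (le_max_left _ _) hz)
    have h := (div_lt_iff₀ (hpos z)).mp h0
    linarith
  have hiter : ∀ t, T ≤ t → ∀ n : ℕ, 1 - FF (t * Real.exp n) ≤ c ^ n * (1 - FF t) := by
    intro t ht n
    induction n with
    | zero => simp
    | succ n ih =>
      have ht0 : (1:ℝ) ≤ t := hT1.trans ht
      have htn : T ≤ t * Real.exp n := by
        have h1 : (1:ℝ) ≤ Real.exp (n:ℝ) := Real.one_le_exp (by positivity)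
        nlinarith
      have h2 := hstep _ htn
      have h3 : Real.exp 1 * (t * Real.exp (n:ℝ)) = t * Real.exp ((n:ℕ)+1 : ℕ) := by
        push_cast
        rw [Real.exp_add]
        ring
      calc 1 - FF (t * Real.exp ((n:ℕ)+1 : ℕ))
          = 1 - FF (Real.exp 1 * (t * Real.exp (n:ℝ))) := by rw [h3]
        _ ≤ c * (1 - FF (t * Real.exp (n:ℝ))) := h2
        _ ≤ c * (c ^ n * (1 - FF t)) := by nlinarith
        _ = c ^ (n+1) * (1 - FF t) := by ring
  have hbound : ∀ t, T ≤ t → ∀ s, 0 ≤ s →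
      (1 - FF t)⁻¹ * (1 - FF (t * Real.exp s)) ≤ c⁻¹ * Real.exp (-(1/(2*γ₁)) * s) := by
    intro t ht s hs
    set n : ℕ := ⌊s⌋₊ with hn
    have hns : (n:ℝ) ≤ s := Nat.floor_le hs
    have hsn : s < n + 1 := Nat.lt_floor_add_one s
    have hFt := hpos t
    have h1 : 1 - FF (t * Real.exp s) ≤ 1 - FF (t * Real.exp (n:ℝ)) := by
      have hmul : t * Real.exp (n:ℝ) ≤ t * Real.exp s :=
        mul_le_mul_of_nonneg_left (Real.exp_le_exp.mpr hns) (by linarith [hT1.trans ht])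
      linarith [hFFmono hmul]
    have h2 := hiter t ht n
    have h3 : c ^ n = Real.exp (-(1/(2*γ₁)) * (n:ℝ)) := by
      rw [hc, ← Real.exp_nat_mul]
      ring_nf
    have h4 : Real.exp (-(1/(2*γ₁)) * (n:ℝ)) ≤ c⁻¹ * Real.exp (-(1/(2*γ₁)) * s) := by
      rw [hc, ← Real.exp_neg, ← Real.exp_add]
      apply Real.exp_le_exp.mpr
      have h5 : 0 < 1/(2*γ₁) := by positivity
      nlinarith
    have h6 : (1 - FF t)⁻¹ * (1 - FF (t * Real.exp s))
        ≤ (1 - FF t)⁻¹ * (c ^ n * (1 - FF t)) :=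
      mul_le_mul_of_nonneg_left (h1.trans h2) (inv_nonneg.mpr hFt.le)
    have h7 : (1 - FF t)⁻¹ * (c ^ n * (1 - FF t)) = c ^ n := by
      field_simp
    rw [h7] at h6
    calc (1 - FF t)⁻¹ * (1 - FF (t * Real.exp s)) ≤ c ^ n := h6
      _ = Real.exp (-(1/(2*γ₁)) * (n:ℝ)) := h3
      _ ≤ c⁻¹ * Real.exp (-(1/(2*γ₁)) * s) := h4
  -- the limit integral
  have hγinv : ∫ s in Set.Ioi (0:ℝ), Real.exp (-(γ₁⁻¹) * s) = γ₁ := by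
    have hderiv : ∀ x ∈ Set.Ici (0:ℝ),
        HasDerivAt (fun s => -γ₁ * Real.exp (-(γ₁⁻¹) * s)) (Real.exp (-(γ₁⁻¹) * x)) x := by
      intro x _
      have h1 : HasDerivAt (fun s : ℝ => -(γ₁⁻¹) * s) (-(γ₁⁻¹)) x := by
        simpa using (hasDerivAt_id x).const_mul (-(γ₁⁻¹))
      have h2 := (Real.hasDerivAt_exp (-(γ₁⁻¹) * x)).comp x h1
      have h3 := h2.const_mul (-γ₁)
      refine h3.congr_deriv ?_
      field_simp
    have hint : IntegrableOn (fun s => Real.exp (-(γ₁⁻¹) * s)) (Set.Ioi (0:ℝ)) :=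
      exp_neg_integrableOn_Ioi 0 (by positivity)
    have htends : Tendsto (fun s => -γ₁ * Real.exp (-(γ₁⁻¹) * s)) atTop (nhds 0) := by
      have h1 : Tendsto (fun s : ℝ => γ₁⁻¹ * s) atTop atTop :=
        Tendsto.const_mul_atTop (by positivity) tendsto_id
      have h2 := Real.tendsto_exp_neg_atTop_nhds_zero.comp h1
      have h3 := h2.const_mul (-γ₁)
      simpa [Function.comp, neg_mul, mul_zero] using h3
    have hval := integral_Ioi_of_hasDerivAt_of_tendsto' hderiv hint htends
    rw [hval]
    simp
  -- dominated convergence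
  have hDCT : Tendsto
      (fun t => ∫ s in Set.Ioi (0:ℝ), (1 - FF t)⁻¹ * (1 - FF (t * Real.exp s)))
      atTop (nhds γ₁) := by
    rw [← hγinv]
    apply tendsto_integral_filter_of_dominated_convergence
      (bound := fun s => c⁻¹ * Real.exp (-(1/(2*γ₁)) * s))
    · apply Eventually.of_forall
      intro t
      have hcont : Continuous fun s : ℝ => (1 - FF t)⁻¹ * (1 - FF (t * Real.exp s)) :=
        continuous_const.mul
          (continuous_const.sub (hFFcont.comp (continuous_const.mul Real.continuous_exp)))
      exact hcont.aestronglyMeasurable.restrict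
    · filter_upwards [eventually_ge_atTop T] with t ht
      apply ae_restrict_of_forall_mem measurableSet_Ioi
      intro s hs
      rw [Real.norm_eq_abs,
        abs_of_nonneg (mul_nonneg (inv_nonneg.mpr (hpos t).le) (hpos _).le)]
      exact hbound t ht s (le_of_lt hs)
    · exact (exp_neg_integrableOn_Ioi 0 (b := 1/(2*γ₁)) (by positivity)).const_mul _
    · apply ae_restrict_of_forall_mem measurableSet_Ioi
      intro s hs
      have hlim := hRVF (Real.exp s) (Real.exp_pos s)
      have hr : (Real.exp s) ^ (-(1/γ₁)) = Real.exp (-(γ₁⁻¹) * s) := by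
        rw [Real.rpow_def_of_pos (Real.exp_pos s), Real.log_exp]
        ring_nf
      rw [hr] at hlim
      apply hlim.congr
      intro z
      rw [div_eq_mul_inv, mul_comm (Real.exp s) z, mul_comm]
  -- conclusion
  apply hDCT.congr'
  filter_upwards [eventually_ge_atTop T] with t ht
  have ht0 : (0:ℝ) < t := lt_of_lt_of_le one_pos (hT1.trans ht)
  rw [MeasureTheory.integral_const_mul, hident t ht0]
end

section
/- Under the truncation model with regularly varying tails 𝐅̄ and 𝐆̄ of indices −1/γ₁ and −1/γ₂, one has lim_{x→∞} ( ∫_{(x,∞)} 𝐆̄(z) dμ_𝐅(z) ) / ( 𝐅̄(x)·𝐆̄(x) ) = γ/γ₁ = γ₂/(γ₁+γ₂), where γ := γ₁γ₂/(γ₁+γ₂); equivalently, p·F̄(x)/(𝐅̄(x)𝐆̄(x)) → γ₂/(γ₁+γ₂) as x → ∞, with F̄ := 1−F. -/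
set_option maxHeartbeats 1000000


open MeasureTheory Filter Set Real

lemma exp_ratio_tendsto (c : ℝ) :
    Tendsto (fun t => (1 - Real.exp (-(c * t))) / t) (nhdsWithin 0 (Set.Ioi 0)) (nhds c) := by
  have hd : HasDerivAt (fun s : ℝ => 1 - Real.exp (-(c * s))) c 0 := by
    have h1 : HasDerivAt (fun s : ℝ => -(c * s)) (-c) 0 := by
      simpa using ((hasDerivAt_id (0:ℝ)).const_mul (-c))
    have h2 := h1.exp
    have h3 := h2.const_sub 1
    simpa using h3
  have h4 := hasDerivAt_iff_tendsto_slope.mp hd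
  have h5 : Tendsto (slope (fun s : ℝ => 1 - Real.exp (-(c*s))) 0)
      (nhdsWithin 0 (Set.Ioi 0)) (nhds c) :=
    h4.mono_left (nhdsWithin_mono 0 (fun y hy => ne_of_gt hy))
  refine h5.congr (fun s => ?_)
  simp [slope_def_field]

lemma aux_main (r : ℝ → ℝ) (α β : ℝ) (hα : 0 < α) (hβ : 0 < β)
    (hr0 : ∀ x, 0 ≤ r x) (hr1 : ∀ x, r x ≤ 1)
    (hstep : ∀ t : ℝ, 0 < t → ∃ u v : ℝ → ℝ,
      (∀ x, 0 < u x) ∧ (∀ x, 0 < v x) ∧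
      Tendsto u atTop (nhds (Real.exp (-(α * t)))) ∧
      Tendsto v atTop (nhds (Real.exp (-(β * t)))) ∧
      (∀ x, 1 ≤ x →
        (v x * (1 - u x) + r (Real.exp t * x) * (u x * v x) ≤ r x ∧
         r x ≤ (1 - u x) + r (Real.exp t * x) * (u x * v x)))) :
    Tendsto r atTop (nhds (α / (α + β))) := by
  set c := α / (α + β) with hc
  rw [Metric.tendsto_atTop]
  intro ε hε
  -- Step 1: choose t > 0 with the λ→1 bounds
  have hgnum := exp_ratio_tendsto α
  have hgden := exp_ratio_tendsto (α + β)
  have hg : Tendsto (fun t => (1 - Real.exp (-(α*t))) / (1 - Real.exp (-((α+β)*t))))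
      (nhdsWithin 0 (Set.Ioi 0)) (nhds c) := by
    have h := hgnum.div hgden (by positivity)
    refine Tendsto.congr' ?_ h
    filter_upwards [self_mem_nhdsWithin] with s hs
    have hs' : (s:ℝ) ≠ 0 := ne_of_gt hs
    rw [Pi.div_apply]
    field_simp
  have hb1 : Tendsto (fun t : ℝ => Real.exp (-(β*t))) (nhdsWithin 0 (Set.Ioi 0)) (nhds 1) := by
    have hcont : Continuous fun t : ℝ => Real.exp (-(β*t)) := by continuity
    have h0 := hcont.tendsto 0
    simp only [mul_zero, neg_zero, Real.exp_zero] at h0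
    exact h0.mono_left nhdsWithin_le_nhds
  have hgl : Tendsto (fun t => Real.exp (-(β*t)) *
      ((1 - Real.exp (-(α*t))) / (1 - Real.exp (-((α+β)*t)))))
      (nhdsWithin 0 (Set.Ioi 0)) (nhds c) := by
    simpa using hb1.mul hg
  obtain ⟨t, ht, h1t, h2t⟩ : ∃ t : ℝ, 0 < t ∧
      (1 - Real.exp (-(α*t))) / (1 - Real.exp (-((α+β)*t))) < c + ε/2 ∧
      c - ε/2 < Real.exp (-(β*t)) *
        ((1 - Real.exp (-(α*t))) / (1 - Real.exp (-((α+β)*t)))) := by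
    have e1 := hg.eventually_lt_const (show c < c + ε/2 by linarith)
    have e2 := hgl.eventually_const_lt (show c - ε/2 < c by linarith)
    obtain ⟨t, ⟨h1t, h2t⟩, ht⟩ := ((e1.and e2).and self_mem_nhdsWithin).exists
    exact ⟨t, ht, h1t, h2t⟩
  set a := Real.exp (-(α*t)) with ha
  set b := Real.exp (-(β*t)) with hb
  have ha0 : 0 < a := Real.exp_pos _
  have hb0 : 0 < b := Real.exp_pos _
  have hab : a * b = Real.exp (-((α+β)*t)) := by
    rw [ha, hb, ← Real.exp_add]; ring_nf
  have ha1 : a < 1 := by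
    rw [ha]; exact Real.exp_lt_one_iff.mpr (by nlinarith)
  have hb1' : b < 1 := by
    rw [hb]; exact Real.exp_lt_one_iff.mpr (by nlinarith)
  have hab1 : a * b < 1 := by
    rw [hab]; exact Real.exp_lt_one_iff.mpr (by nlinarith)
  have hU0 : (1-a)/(1-a*b) < c + ε/2 := by rw [hab]; exact h1t
  have hL0 : c - ε/2 < b * ((1-a)/(1-a*b)) := by rw [hab]; exact h2t
  -- Step 2: choose δ > 0
  have hid : Tendsto (fun δ : ℝ => δ) (nhdsWithin 0 (Set.Ioi 0)) (nhds 0) :=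
    tendsto_id.mono_right nhdsWithin_le_nhds
  have hqt : Tendsto (fun δ => (a+δ)*(b+δ)) (nhdsWithin 0 (Set.Ioi 0)) (nhds (a*b)) := by
    simpa using ((hid.const_add a).mul (hid.const_add b))
  have hq't : Tendsto (fun δ => (a-δ)*(b-δ)) (nhdsWithin 0 (Set.Ioi 0)) (nhds (a*b)) := by
    simpa using ((hid.const_sub a).mul (hid.const_sub b))
  have habne : (1 : ℝ) - a*b ≠ 0 := by linarith
  have hUt : Tendsto (fun δ => (1-a+δ)/(1-(a+δ)*(b+δ))) (nhdsWithin 0 (Set.Ioi 0))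
      (nhds ((1-a)/(1-a*b))) := by
    have h := (hid.const_add (1-a)).div (hqt.const_sub 1) (by simpa using habne)
    simpa [Pi.div_def] using h
  have hLt : Tendsto (fun δ => (b-δ)*(1-a-δ)/(1-(a-δ)*(b-δ))) (nhdsWithin 0 (Set.Ioi 0))
      (nhds (b*(1-a)/(1-a*b))) := by
    have h := ((hid.const_sub b).mul (hid.const_sub (1-a))).div
      (hq't.const_sub 1) (by simpa using habne)
    simpa [Pi.div_def] using h
  obtain ⟨δ, hδpos, hδa, hδb, hδ1a, hq1, hU, hL⟩ : ∃ δ : ℝ, 0 < δ ∧ δ < a ∧ δ < b ∧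
      δ < 1 - a ∧ (a+δ)*(b+δ) < 1 ∧
      (1-a+δ)/(1-(a+δ)*(b+δ)) < c + ε ∧
      c - ε < (b-δ)*(1-a-δ)/(1-(a-δ)*(b-δ)) := by
    have e0 : ∀ᶠ δ in nhdsWithin 0 (Set.Ioi 0), (0:ℝ) < δ := eventually_mem_nhdsWithin
    have e1 := hid.eventually_lt_const ha0
    have e2 := hid.eventually_lt_const hb0
    have e3 := hid.eventually_lt_const (show (0:ℝ) < 1 - a by linarith)
    have e4 := hqt.eventually_lt_const hab1
    have e5 := hUt.eventually_lt_const (show (1-a)/(1-a*b) < c + ε by linarith)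
    have e6 := hLt.eventually_const_lt (show c - ε < b*(1-a)/(1-a*b) by
      rw [mul_div_assoc]; linarith)
    obtain ⟨δ, h⟩ := (e0.and (e1.and (e2.and (e4.and (e3.and (e5.and e6)))))).exists
    exact ⟨δ, h.1, h.2.1, h.2.2.1, h.2.2.2.2.1, h.2.2.2.1, h.2.2.2.2.2.1, h.2.2.2.2.2.2⟩
  -- Step 3: get u, v and a threshold X₀
  obtain ⟨u, v, hupos, hvpos, hut, hvt, hineq⟩ := hstep t ht
  have hbu : ∀ᶠ x in atTop, |u x - a| < δ := by
    have := (Metric.tendsto_nhds.mp hut) δ hδpos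
    simpa [Real.dist_eq] using this
  have hbv : ∀ᶠ x in atTop, |v x - b| < δ := by
    have := (Metric.tendsto_nhds.mp hvt) δ hδpos
    simpa [Real.dist_eq] using this
  obtain ⟨X₀, hX₀⟩ := eventually_atTop.mp ((eventually_ge_atTop (1:ℝ)).and (hbu.and hbv))
  set q := (a+δ)*(b+δ) with hqdef
  set q' := (a-δ)*(b-δ) with hq'def
  set A := 1 - a + δ with hAdef
  set m := (b-δ)*(1-a-δ) with hmdef
  have hq0 : 0 ≤ q := by nlinarith
  have hq'0 : 0 ≤ q' := by nlinarith
  have hq'1 : q' < 1 := by nlinarith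
  have hA0 : 0 ≤ A := by simp only [hAdef]; linarith
  have hm0 : 0 ≤ m := by nlinarith
  have hexpt1 : (1:ℝ) ≤ Real.exp t := by nlinarith [Real.add_one_le_exp t]
  have hLx : ∀ x, X₀ ≤ x → X₀ ≤ Real.exp t * x := by
    intro x hx
    have h1x := (hX₀ x hx).1
    nlinarith
  -- Step 4: inductive upper/lower bounds
  have hub : ∀ n : ℕ, ∀ x, X₀ ≤ x → r x ≤ A * ((1 - q^n)/(1-q)) + q^n := by
    intro n
    induction n with
    | zero => intro x hx; simpa using hr1 x
    | succ n ih =>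
      intro x hx
      obtain ⟨h1x, hux, hvx⟩ := hX₀ x hx
      rw [abs_sub_lt_iff] at hux hvx
      have hu1 : a - δ < u x := by linarith [hux.2]
      have hu2 : u x < a + δ := by linarith [hux.1]
      have hv2 : v x < b + δ := by linarith [hvx.1]
      have hs := (hineq x h1x).2
      have hrec := ih (Real.exp t * x) (hLx x hx)
      have huv0 : 0 ≤ u x * v x := le_of_lt (mul_pos (hupos x) (hvpos x))
      have huvq : u x * v x ≤ q :=
        mul_le_mul hu2.le hv2.le (hvpos x).le (by linarith)
      have hqn1 : q^n ≤ 1 := pow_le_one₀ hq0 (le_of_lt hq1)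
      have hqn0 : (0:ℝ) ≤ q^n := pow_nonneg hq0 n
      have hbr : 0 ≤ A * ((1 - q^n)/(1-q)) + q^n := by
        have hdiv : 0 ≤ (1-q^n)/(1-q) := div_nonneg (by linarith) (by linarith)
        nlinarith
      have hmul : r (Real.exp t * x) * (u x * v x) ≤ (A * ((1 - q^n)/(1-q)) + q^n) * q :=
        mul_le_mul hrec huvq huv0 hbr
      have hqne : (1:ℝ) - q ≠ 0 := by linarith
      have hfin : A + (A * ((1 - q^n)/(1-q)) + q^n) * q
          = A * ((1 - q^(n+1))/(1-q)) + q^(n+1) := by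
        field_simp
        ring
      calc r x ≤ (1 - u x) + r (Real.exp t * x) * (u x * v x) := hs
        _ ≤ A + (A * ((1 - q^n)/(1-q)) + q^n) * q := by
            have : 1 - u x ≤ A := by simp only [hAdef]; linarith
            linarith
        _ = A * ((1 - q^(n+1))/(1-q)) + q^(n+1) := hfin
  have hlb : ∀ n : ℕ, ∀ x, X₀ ≤ x → m * ((1 - q'^n)/(1-q')) ≤ r x := by
    intro n
    induction n with
    | zero => intro x hx; simpa using hr0 x
    | succ n ih =>
      intro x hx
      obtain ⟨h1x, hux, hvx⟩ := hX₀ x hx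
      rw [abs_sub_lt_iff] at hux hvx
      have hu1 : a - δ < u x := by linarith [hux.2]
      have hu2 : u x < a + δ := by linarith [hux.1]
      have hv1 : b - δ < v x := by linarith [hvx.2]
      have hs := (hineq x h1x).1
      have hrec := ih (Real.exp t * x) (hLx x hx)
      have huvq' : q' ≤ u x * v x :=
        mul_le_mul hu1.le hv1.le (by linarith) (hupos x).le
      have hm1 : m ≤ v x * (1 - u x) :=
        mul_le_mul hv1.le (by linarith) (by linarith) (hvpos x).le
      have hTn0 : 0 ≤ m * ((1 - q'^n)/(1-q')) := by
        have hqn1 : q'^n ≤ 1 := pow_le_one₀ hq'0 (le_of_lt hq'1)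
        have : 0 ≤ (1-q'^n)/(1-q') := div_nonneg (by linarith) (by linarith)
        positivity
      have hmul : (m * ((1 - q'^n)/(1-q'))) * q' ≤ r (Real.exp t * x) * (u x * v x) :=
        mul_le_mul hrec huvq' hq'0 (hr0 _)
      have hq'ne : (1:ℝ) - q' ≠ 0 := by linarith
      have hfin : m + (m * ((1 - q'^n)/(1-q'))) * q'
          = m * ((1 - q'^(n+1))/(1-q')) := by
        field_simp
        ring
      calc m * ((1 - q'^(n+1))/(1-q')) = m + (m * ((1 - q'^n)/(1-q'))) * q' := hfin.symm
        _ ≤ v x * (1 - u x) + r (Real.exp t * x) * (u x * v x) := by linarith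
        _ ≤ r x := hs
  -- Step 5: pass to the limit n → ∞
  refine ⟨X₀, fun x hx => ?_⟩
  have hpowq : Tendsto (fun n : ℕ => q^n) atTop (nhds 0) :=
    tendsto_pow_atTop_nhds_zero_of_lt_one hq0 hq1
  have hpowq' : Tendsto (fun n : ℕ => q'^n) atTop (nhds 0) :=
    tendsto_pow_atTop_nhds_zero_of_lt_one hq'0 hq'1
  have hTq : Tendsto (fun n : ℕ => A * ((1 - q^n)/(1-q)) + q^n) atTop (nhds (A/(1-q))) := by
    have h := (((hpowq.const_sub 1).div_const (1-q)).const_mul A).add hpowq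
    simpa [mul_one_div, div_eq_mul_inv] using h
  have hTq' : Tendsto (fun n : ℕ => m * ((1 - q'^n)/(1-q'))) atTop (nhds (m/(1-q'))) := by
    have h := ((hpowq'.const_sub 1).div_const (1-q')).const_mul m
    simpa [mul_one_div, div_eq_mul_inv] using h
  have hxu : r x ≤ A/(1-q) := ge_of_tendsto' hTq (fun n => hub n x hx)
  have hxl : m/(1-q') ≤ r x := le_of_tendsto' hTq' (fun n => hlb n x hx)
  have hU' : A/(1-q) < c + ε := hU
  have hL' : c - ε < m/(1-q') := by
    have : m/(1-q') = (b-δ)*(1-a-δ)/(1-(a-δ)*(b-δ)) := by rw [hmdef, hq'def]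
    rw [this]; exact hL
  rw [Real.dist_eq, abs_sub_lt_iff]
  constructor <;> linarith


/-- Under the truncation model with regularly varying tails `𝐅̄`, `𝐆̄` of
indices `−1/γ₁`, `−1/γ₂`, one has
`(∫_{(x,∞)} 𝐆̄ dμ_𝐅)/(𝐅̄(x)·𝐆̄(x)) → γ/γ₁ = γ₂/(γ₁+γ₂)` as `x → ∞`, where
`γ := γ₁γ₂/(γ₁+γ₂)`; equivalently `p·F̄(x)/(𝐅̄(x)𝐆̄(x)) → γ₂/(γ₁+γ₂)`. -/
theorem tail_integral_ratio_limit
    (FF GG : ℝ → ℝ) (γ₁ γ₂ : ℝ) (hγ₁ : 0 < γ₁) (hγ₂ : 0 < γ₂)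
    (hFFmono : Monotone FF) (hFFcont : Continuous FF)
    (hFF0 : ∀ x ≤ (0 : ℝ), FF x = 0) (hFFtop : Tendsto FF atTop (nhds 1))
    (hGGmono : Monotone GG) (hGGcont : Continuous GG)
    (hGG0 : ∀ x ≤ (0 : ℝ), GG x = 0) (hGGtop : Tendsto GG atTop (nhds 1))
    (hFFlt : ∀ z : ℝ, FF z < 1) (hGGlt : ∀ z : ℝ, GG z < 1)
    (hRVF : ∀ x > (0 : ℝ),
      Tendsto (fun z => (1 - FF (x * z)) / (1 - FF z)) atTop (nhds (x ^ (-(1 / γ₁)))))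
    (hRVG : ∀ x > (0 : ℝ),
      Tendsto (fun z => (1 - GG (x * z)) / (1 - GG z)) atTop (nhds (x ^ (-(1 / γ₂)))))
    (μF : Measure ℝ) (hμF : ∀ b, μF (Set.Iic b) = ENNReal.ofReal (FF b))
    (p : ℝ) (hp : p = ∫ z in Set.Ioi (0 : ℝ), (1 - GG z) ∂μF) (hppos : 0 < p)
    (F : ℝ → ℝ)
    (hF : ∀ x, F x = p⁻¹ * ∫ z in Set.Ioc (0 : ℝ) x, (1 - GG z) ∂μF)
    (γ : ℝ) (hγ : γ = γ₁ * γ₂ / (γ₁ + γ₂)) :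
    Tendsto (fun x => (∫ z in Set.Ioi x, (1 - GG z) ∂μF) / ((1 - FF x) * (1 - GG x)))
      atTop (nhds (γ / γ₁)) ∧
    γ / γ₁ = γ₂ / (γ₁ + γ₂) ∧
    Tendsto (fun x => p * (1 - F x) / ((1 - FF x) * (1 - GG x)))
      atTop (nhds (γ₂ / (γ₁ + γ₂))) := by
  -- Basic positivity facts
  have hFge : ∀ z, 0 ≤ FF z := by
    intro z
    rcases le_total z 0 with h | h
    · rw [hFF0 z h]
    · rw [← hFF0 0 le_rfl]; exact hFFmono h
  have hGge : ∀ z, 0 ≤ GG z := by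
    intro z
    rcases le_total z 0 with h | h
    · rw [hGG0 z h]
    · rw [← hGG0 0 le_rfl]; exact hGGmono h
  have hFb : ∀ z, 0 < 1 - FF z := fun z => by linarith [hFFlt z]
  have hGb : ∀ z, 0 < 1 - GG z := fun z => by linarith [hGGlt z]
  -- μF is a probability measure
  have hμuniv : μF univ = 1 := by
    have h1 := tendsto_measure_Iic_atTop (μ := μF)
    simp only [hμF] at h1
    have h2 : Tendsto (fun x => ENNReal.ofReal (FF x)) atTop (nhds (ENNReal.ofReal 1)) :=
      (ENNReal.continuous_ofReal.tendsto 1).comp hFFtop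
    have := tendsto_nhds_unique h1 h2
    rw [this, ENNReal.ofReal_one]
  haveI : IsFiniteMeasure μF := ⟨by rw [hμuniv]; exact ENNReal.one_lt_top⟩
  have hIoi : ∀ x, μF (Set.Ioi x) = ENNReal.ofReal (1 - FF x) := by
    intro x
    rw [← Set.compl_Iic, measure_compl measurableSet_Iic (measure_ne_top _ _), hμuniv, hμF,
      ENNReal.ofReal_sub 1 (hFge x), ENNReal.ofReal_one]
  have hIoc : ∀ x y : ℝ, x ≤ y → μF (Set.Ioc x y) = ENNReal.ofReal (FF y - FF x) := by
    intro x y hxy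
    rw [← Set.Iic_sdiff_Iic, measure_diff (Set.Iic_subset_Iic.mpr hxy)
      measurableSet_Iic.nullMeasurableSet (measure_ne_top _ _), hμF, hμF,
      ENNReal.ofReal_sub _ (hFge x)]
  -- Integrability
  have hGmeas : Continuous (fun z : ℝ => 1 - GG z) := continuous_const.sub hGGcont
  have hint : ∀ s : Set ℝ, IntegrableOn (fun z => 1 - GG z) s μF := by
    intro s
    refine Integrable.integrableOn ?_
    refine Integrable.mono' (integrable_const 1) hGmeas.aestronglyMeasurable ?_
    filter_upwards with z
    rw [Real.norm_eq_abs, abs_of_pos (hGb z)]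
    linarith [hGge z]
  -- Splitting the tail integral
  have hsplit : ∀ x y : ℝ, x ≤ y →
      (∫ z in Set.Ioi x, (1 - GG z) ∂μF) =
        (∫ z in Set.Ioc x y, (1 - GG z) ∂μF) + ∫ z in Set.Ioi y, (1 - GG z) ∂μF := by
    intro x y hxy
    rw [← Set.Ioc_union_Ioi_eq_Ioi hxy]
    refine setIntegral_union ?_ measurableSet_Ioi (hint _) (hint _)
    exact Set.disjoint_left.mpr (fun z hz hz' => absurd hz.2 (not_le.mpr hz'))
  -- Bounds on pieces
  have hIocUp : ∀ x y : ℝ, x ≤ y →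
      (∫ z in Set.Ioc x y, (1 - GG z) ∂μF) ≤ (FF y - FF x) * (1 - GG x) := by
    intro x y hxy
    calc (∫ z in Set.Ioc x y, (1 - GG z) ∂μF)
        ≤ ∫ _ in Set.Ioc x y, (1 - GG x) ∂μF := by
          refine setIntegral_mono_on (hint _) ?_ measurableSet_Ioc (fun z hz => by
            linarith [hGGmono hz.1.le])
          exact integrableOn_const (measure_ne_top _ _)
      _ = (FF y - FF x) * (1 - GG x) := by
          rw [setIntegral_const, measureReal_def, hIoc x y hxy, ENNReal.toReal_ofReal
            (sub_nonneg.mpr (hFFmono hxy)), smul_eq_mul]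
  have hIocLo : ∀ x y : ℝ, x ≤ y →
      (FF y - FF x) * (1 - GG y) ≤ ∫ z in Set.Ioc x y, (1 - GG z) ∂μF := by
    intro x y hxy
    calc (FF y - FF x) * (1 - GG y)
        = ∫ _ in Set.Ioc x y, (1 - GG y) ∂μF := by
          rw [setIntegral_const, measureReal_def, hIoc x y hxy, ENNReal.toReal_ofReal
            (sub_nonneg.mpr (hFFmono hxy)), smul_eq_mul]
      _ ≤ ∫ z in Set.Ioc x y, (1 - GG z) ∂μF := by
          refine setIntegral_mono_on ?_ (hint _) measurableSet_Ioc (fun z hz => by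
            linarith [hGGmono hz.2])
          exact integrableOn_const (measure_ne_top _ _)
  -- H is nonnegative and bounded by (1-FF)(1-GG)
  have hH0 : ∀ x, 0 ≤ ∫ z in Set.Ioi x, (1 - GG z) ∂μF := fun x =>
    setIntegral_nonneg measurableSet_Ioi (fun z _ => (hGb z).le)
  have hHle : ∀ x, (∫ z in Set.Ioi x, (1 - GG z) ∂μF) ≤ (1 - FF x) * (1 - GG x) := by
    intro x
    calc (∫ z in Set.Ioi x, (1 - GG z) ∂μF)
        ≤ ∫ _ in Set.Ioi x, (1 - GG x) ∂μF := by
          refine setIntegral_mono_on (hint _) ?_ measurableSet_Ioi (fun z hz => by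
            linarith [hGGmono (le_of_lt hz)])
          exact integrableOn_const (measure_ne_top _ _)
      _ = (1 - FF x) * (1 - GG x) := by
          rw [setIntegral_const, measureReal_def, hIoi x, ENNReal.toReal_ofReal (hFb x).le, smul_eq_mul]
  -- The ratio function
  have hDpos : ∀ x : ℝ, 0 < (1 - FF x) * (1 - GG x) := fun x => mul_pos (hFb x) (hGb x)
  have hval : (1/γ₁)/((1/γ₁)+(1/γ₂)) = γ₂/(γ₁+γ₂) := by
    have h3 : γ₁ + γ₂ ≠ 0 := by positivity
    have h4 : (1/γ₁)+(1/γ₂) ≠ 0 := by positivity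
    rw [div_eq_div_iff h4 h3]
    field_simp
    ring
  have part2 : γ / γ₁ = γ₂ / (γ₁ + γ₂) := by
    have h3 : γ₁ + γ₂ ≠ 0 := by positivity
    rw [hγ, div_eq_div_iff (ne_of_gt hγ₁) h3]
    field_simp
  have key : Tendsto (fun x => (∫ z in Set.Ioi x, (1 - GG z) ∂μF) /
      ((1 - FF x) * (1 - GG x))) atTop (nhds ((1/γ₁) / ((1/γ₁) + (1/γ₂)))) := by
    refine aux_main _ (1/γ₁) (1/γ₂) (by positivity) (by positivity)
      (fun x => div_nonneg (hH0 x) (hDpos x).le)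
      (fun x => (div_le_one (hDpos x)).mpr (hHle x)) ?_
    intro t ht
    have hxy : ∀ x : ℝ, 0 ≤ x → x ≤ Real.exp t * x := by
      intro x hx
      nlinarith [Real.add_one_le_exp t]
    refine ⟨fun x => (1 - FF (Real.exp t * x)) / (1 - FF x),
      fun x => (1 - GG (Real.exp t * x)) / (1 - GG x),
      fun x => div_pos (hFb _) (hFb _), fun x => div_pos (hGb _) (hGb _), ?_, ?_, ?_⟩
    · have h := hRVF (Real.exp t) (Real.exp_pos t)
      have hv : Real.exp t ^ (-(1/γ₁)) = Real.exp (-(1/γ₁ * t)) := by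
        rw [Real.rpow_def_of_pos (Real.exp_pos t), Real.log_exp]
        congr 1
        ring
      rwa [hv] at h
    · have h := hRVG (Real.exp t) (Real.exp_pos t)
      have hv : Real.exp t ^ (-(1/γ₂)) = Real.exp (-(1/γ₂ * t)) := by
        rw [Real.rpow_def_of_pos (Real.exp_pos t), Real.log_exp]
        congr 1
        ring
      rwa [hv] at h
    · intro x hx1
      have hx0 : (0:ℝ) < x := lt_of_lt_of_le one_pos hx1
      have hxy' : x ≤ Real.exp t * x := hxy x hx0.le
      have hF1 : (1 : ℝ) - FF x ≠ 0 := (hFb x).ne'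
      have hF2 : (1 : ℝ) - FF (Real.exp t * x) ≠ 0 := (hFb _).ne'
      have hG1 : (1 : ℝ) - GG x ≠ 0 := (hGb x).ne'
      have hG2 : (1 : ℝ) - GG (Real.exp t * x) ≠ 0 := (hGb _).ne'
      have hsp := hsplit x (Real.exp t * x) hxy'
      constructor
      · rw [le_div_iff₀ (hDpos x)]
        have hexp : ((1 - GG (Real.exp t * x)) / (1 - GG x) *
            (1 - (1 - FF (Real.exp t * x)) / (1 - FF x)) +
            (∫ z in Set.Ioi (Real.exp t * x), (1 - GG z) ∂μF) /
              ((1 - FF (Real.exp t * x)) * (1 - GG (Real.exp t * x))) *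
            ((1 - FF (Real.exp t * x)) / (1 - FF x) *
              ((1 - GG (Real.exp t * x)) / (1 - GG x)))) * ((1 - FF x) * (1 - GG x))
            = (FF (Real.exp t * x) - FF x) * (1 - GG (Real.exp t * x)) +
              ∫ z in Set.Ioi (Real.exp t * x), (1 - GG z) ∂μF := by
          field_simp
          ring
        rw [hexp, hsp]
        linarith [hIocLo x (Real.exp t * x) hxy']
      · rw [div_le_iff₀ (hDpos x)]
        have hexp : ((1 - (1 - FF (Real.exp t * x)) / (1 - FF x)) +
            (∫ z in Set.Ioi (Real.exp t * x), (1 - GG z) ∂μF) /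
              ((1 - FF (Real.exp t * x)) * (1 - GG (Real.exp t * x))) *
            ((1 - FF (Real.exp t * x)) / (1 - FF x) *
              ((1 - GG (Real.exp t * x)) / (1 - GG x)))) * ((1 - FF x) * (1 - GG x))
            = (FF (Real.exp t * x) - FF x) * (1 - GG x) +
              ∫ z in Set.Ioi (Real.exp t * x), (1 - GG z) ∂μF := by
          field_simp
          ring
        rw [hexp, hsp]
        linarith [hIocUp x (Real.exp t * x) hxy']
  refine ⟨?_, part2, ?_⟩
  · rw [show γ/γ₁ = (1/γ₁)/((1/γ₁)+(1/γ₂)) from part2.trans hval.symm]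
    exact key
  · have key2 : Tendsto (fun x => (∫ z in Set.Ioi x, (1 - GG z) ∂μF) /
        ((1 - FF x) * (1 - GG x))) atTop (nhds (γ₂/(γ₁+γ₂))) := hval ▸ key
    refine Tendsto.congr' ?_ key2
    filter_upwards [eventually_ge_atTop (0:ℝ)] with x hx
    have e1 : p * (1 - F x) = p - ∫ z in Set.Ioc (0:ℝ) x, (1 - GG z) ∂μF := by
      rw [hF x, mul_sub, mul_one, ← mul_assoc, mul_inv_cancel₀ (ne_of_gt hppos), one_mul]
    have e2 : p * (1 - F x) = ∫ z in Set.Ioi x, (1 - GG z) ∂μF := by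
      rw [e1, hp, hsplit 0 x hx]
      ring
    rw [e2]
end
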